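/- arXiv:2605.06360 — 4 statements merged into one kernel-verified Lean document; each statement's English description precedes it below -/
import Mathlib

section
/- Let $n \geq 1$, let $E_1, \ldots, E_n$ be non-empty finite sets, and let $A = \prod_{i=1}^n E_i$. Then for any function $f : A \to [0,1]$, we have $\mathbf{E}_{\boldsymbol{x}, \boldsymbol{x}' \in A}\, f(\boldsymbol{x}) \prod_{j=1}^n f(\boldsymbol{x} + (x_j' - x_j)\boldsymbol{e_j}) \geq c_n \left(\mathbf{E}_{\boldsymbol{x} \in A} f(\boldsymbol{x})\right)^{n+1}$ for some constant $c_n > 0$ depending only on $n$. -/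
open scoped BigOperators
open Finset

lemma update_mem_piFinset {n : ℕ} {E : Fin n → Finset ℤ} {j : Fin n}
    {x : Fin n → ℤ} (hx : x ∈ Fintype.piFinset E) {t : ℤ} (ht : t ∈ E j) :
    Function.update x j t ∈ Fintype.piFinset E := by
  rw [Fintype.mem_piFinset] at *
  intro i
  rcases eq_or_ne i j with rfl | h
  · simpa using ht
  · simpa [Function.update_of_ne h] using hx i

lemma sum_sum_update {n : ℕ} (E : Fin n → Finset ℤ) (j : Fin n)
    (F : (Fin n → ℤ) → ℝ) :
    ∑ x ∈ Fintype.piFinset E, ∑ t ∈ E j, F (Function.update x j t)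
      = ((E j).card : ℝ) * ∑ x ∈ Fintype.piFinset E, F x := by
  have h1 : ∑ x ∈ Fintype.piFinset E, ∑ t ∈ E j, F (Function.update x j t)
      = ∑ p ∈ Fintype.piFinset E ×ˢ E j, F (Function.update p.1 j p.2) := by
    rw [Finset.sum_product]
  have h2 : ((E j).card : ℝ) * ∑ x ∈ Fintype.piFinset E, F x
      = ∑ p ∈ Fintype.piFinset E ×ˢ E j, F p.1 := by
    rw [Finset.sum_product]
    simp [Finset.mul_sum, mul_comm]
  rw [h1, h2]
  refine Finset.sum_nbij' (i := fun p => (Function.update p.1 j p.2, p.1 j))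
    (j := fun p => (Function.update p.1 j p.2, p.1 j)) ?_ ?_ ?_ ?_ ?_
  · rintro ⟨x, t⟩ hp
    rw [Finset.mem_product] at hp ⊢
    refine ⟨update_mem_piFinset hp.1 hp.2, ?_⟩
    have := (Fintype.mem_piFinset.mp hp.1) j
    simpa using this
  · rintro ⟨x, t⟩ hp
    rw [Finset.mem_product] at hp ⊢
    refine ⟨update_mem_piFinset hp.1 hp.2, ?_⟩
    have := (Fintype.mem_piFinset.mp hp.1) j
    simpa using this
  · rintro ⟨x, t⟩ hp
    simp [Function.update_idem]
  · rintro ⟨x, t⟩ hp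
    simp [Function.update_idem]
  · rintro ⟨x, t⟩ hp
    simp

theorem multidim_positivity (n : ℕ) (hn : 1 ≤ n) :
    ∃ c : ℝ, 0 < c ∧
      ∀ (E : Fin n → Finset ℤ), (∀ i, (E i).Nonempty) →
        ∀ f : (Fin n → ℤ) → ℝ,
          (∀ x ∈ Fintype.piFinset E, f x ∈ Set.Icc (0 : ℝ) 1) →
          c * ((∑ x ∈ Fintype.piFinset E, f x) / (Fintype.piFinset E).card) ^ (n + 1) ≤
            (∑ x ∈ Fintype.piFinset E, ∑ x' ∈ Fintype.piFinset E,
                f x * ∏ j, f (Function.update x j (x' j))) /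
              ((Fintype.piFinset E).card : ℝ) ^ 2 := by
  have hn' : (0:ℝ) < (n:ℝ) := by exact_mod_cast hn
  refine ⟨1 / (2 * (2 * (n:ℝ)) ^ n), by positivity, ?_⟩
  intro E hE f hf
  set A := Fintype.piFinset E with hA
  have hAne : A.Nonempty := by
    rw [hA, Fintype.piFinset_nonempty]
    exact hE
  have hN0 : (0:ℝ) < (A.card : ℝ) := by exact_mod_cast Finset.card_pos.mpr hAne
  set N : ℝ := (A.card : ℝ) with hNdef
  set μ : ℝ := (∑ x ∈ A, f x) / N with hμ
  have hf0 : ∀ x ∈ A, 0 ≤ f x := fun x hx => (hf x hx).1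
  have hμ0 : 0 ≤ μ := div_nonneg (Finset.sum_nonneg hf0) hN0.le
  set θ : ℝ := μ / (2 * n) with hθ
  have hθ0 : 0 ≤ θ := div_nonneg hμ0 (by positivity)
  set S : Fin n → (Fin n → ℤ) → ℝ := fun j x => ∑ t ∈ E j, f (Function.update x j t) with hSdef
  have hS0 : ∀ j, ∀ x ∈ A, 0 ≤ S j x := by
    intro j x hx
    exact Finset.sum_nonneg fun t ht => hf0 _ (update_mem_piFinset hx ht)
  have hSinv : ∀ j t x, S j (Function.update x j t) = S j x := by
    intro j t x
    simp [hSdef, Function.update_idem]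
  -- numerator rewritten
  have hnum : ∑ x ∈ A, ∑ x' ∈ A, f x * ∏ j, f (Function.update x j (x' j))
      = ∑ x ∈ A, f x * ∏ j, S j x := by
    refine Finset.sum_congr rfl fun x hx => ?_
    rw [← Finset.mul_sum]
    congr 1
    have hSx : ∏ j, S j x = ∏ j, ∑ t ∈ E j, f (Function.update x j t) := rfl
    rw [hSx, hA, Finset.prod_univ_sum]
  -- bad set estimate
  have hbad : ∀ j : Fin n,
      ∑ x ∈ A.filter (fun x => S j x < θ * (E j).card), f x ≤ θ * N := by
    intro j
    have hcE : (0:ℝ) < ((E j).card : ℝ) := by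
      exact_mod_cast Finset.card_pos.mpr (hE j)
    have key := sum_sum_update E j (fun x => if S j x < θ * (E j).card then f x else 0)
    have lhs_eq : ∑ x ∈ A, ∑ t ∈ E j,
        (if S j (Function.update x j t) < θ * (E j).card then f (Function.update x j t) else 0)
        = ∑ x ∈ A, (if S j x < θ * (E j).card then S j x else 0) := by
      refine Finset.sum_congr rfl fun x hx => ?_
      by_cases h : S j x < θ * (E j).card
      · simp only [hSinv, h, if_true]
        rfl
      · simp only [hSinv, h, if_false, Finset.sum_const_zero]
    have step : ((E j).card : ℝ) * ∑ x ∈ A, (if S j x < θ * (E j).card then f x else 0)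
        = ∑ x ∈ A, (if S j x < θ * (E j).card then S j x else 0) := by
      rw [← lhs_eq, ← key]
    have bound : ∑ x ∈ A, (if S j x < θ * (E j).card then S j x else 0)
        ≤ ∑ x ∈ A, θ * ((E j).card : ℝ) := by
      refine Finset.sum_le_sum fun x hx => ?_
      by_cases h : S j x < θ * (E j).card
      · simpa [h] using h.le
      · simp only [h, if_false]
        exact mul_nonneg hθ0 (Nat.cast_nonneg _)
    rw [Finset.sum_const, nsmul_eq_mul] at bound
    have : ((E j).card : ℝ) * ∑ x ∈ A, (if S j x < θ * (E j).card then f x else 0)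
        ≤ ((E j).card : ℝ) * (θ * N) := by
      rw [step]
      calc ∑ x ∈ A, (if S j x < θ * (E j).card then S j x else 0)
          ≤ N * (θ * ((E j).card : ℝ)) := bound
        _ = ((E j).card : ℝ) * (θ * N) := by ring
    have h2 := le_of_mul_le_mul_left this hcE
    rwa [← Finset.sum_filter] at h2
  -- good set
  set Good := A.filter (fun x => ∀ j, θ * ((E j).card : ℝ) ≤ S j x) with hGood
  have hGoodSum : μ * N / 2 ≤ ∑ x ∈ Good, f x := by
    have hsplit := Finset.sum_filter_add_sum_filter_not A
      (fun x => ∀ j, θ * ((E j).card : ℝ) ≤ S j x) f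
    have hnotgood : ∑ x ∈ A.filter (fun x => ¬ ∀ j, θ * ((E j).card : ℝ) ≤ S j x), f x
        ≤ (n:ℝ) * (θ * N) := by
      calc ∑ x ∈ A.filter (fun x => ¬ ∀ j, θ * ((E j).card : ℝ) ≤ S j x), f x
          ≤ ∑ x ∈ A.filter (fun x => ¬ ∀ j, θ * ((E j).card : ℝ) ≤ S j x),
              ∑ j, (if S j x < θ * (E j).card then f x else 0) := by
            refine Finset.sum_le_sum fun x hx => ?_
            obtain ⟨hxA, hxng⟩ := Finset.mem_filter.mp hx
            obtain ⟨j, hj⟩ := not_forall.mp hxng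
            have hj' : S j x < θ * (E j).card := lt_of_not_ge hj
            have h1 : f x = (if S j x < θ * (E j).card then f x else 0) := by simp [hj']
            calc f x = (if S j x < θ * (E j).card then f x else 0) := h1
              _ ≤ ∑ i, (if S i x < θ * (E i).card then f x else 0) := by
                  refine Finset.single_le_sum
                    (f := fun i => if S i x < θ * (E i).card then f x else 0)
                    (fun i _ => ?_) (Finset.mem_univ j)
                  by_cases h : S i x < θ * (E i).card
                  · simpa [h] using hf0 x hxA
                  · simp [h]
        _ ≤ ∑ x ∈ A, ∑ j, (if S j x < θ * (E j).card then f x else 0) := by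
            refine Finset.sum_le_sum_of_subset_of_nonneg (Finset.filter_subset _ _)
              fun x hxA _ => Finset.sum_nonneg fun i _ => ?_
            by_cases h : S i x < θ * (E i).card
            · simpa [h] using hf0 x hxA
            · simp [h]
        _ = ∑ j, ∑ x ∈ A, (if S j x < θ * (E j).card then f x else 0) := Finset.sum_comm
        _ = ∑ j : Fin n, ∑ x ∈ A.filter (fun x => S j x < θ * (E j).card), f x := by
            refine Finset.sum_congr rfl fun j _ => ?_
            rw [Finset.sum_filter]
        _ ≤ ∑ j : Fin n, θ * N := Finset.sum_le_sum fun j _ => hbad j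
        _ = (n:ℝ) * (θ * N) := by simp [mul_comm]
    have htot : ∑ x ∈ A, f x = μ * N := by
      rw [hμ]; field_simp
    have hθN : (n:ℝ) * (θ * N) = μ * N / 2 := by
      rw [hθ]; field_simp
    have : ∑ x ∈ Good, f x = ∑ x ∈ A, f x
        - ∑ x ∈ A.filter (fun x => ¬ ∀ j, θ * ((E j).card : ℝ) ≤ S j x), f x := by
      rw [← hsplit]; ring
    rw [this, htot]
    linarith [hnotgood, hθN ▸ hnotgood]
  -- product of cards
  have hcardprod : (∏ j, ((E j).card : ℝ)) = N := by
    rw [hNdef, hA, Fintype.card_piFinset]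
    push_cast
    rfl
  -- lower bound on numerator
  have hlow : θ ^ n * N * (μ * N / 2) ≤ ∑ x ∈ A, f x * ∏ j, S j x := by
    have h1 : ∑ x ∈ Good, f x * ∏ j, S j x ≤ ∑ x ∈ A, f x * ∏ j, S j x := by
      refine Finset.sum_le_sum_of_subset_of_nonneg (Finset.filter_subset _ _)
        fun x hxA _ => mul_nonneg (hf0 x hxA) (Finset.prod_nonneg fun j _ => hS0 j x hxA)
    have h2 : ∀ x ∈ Good, (θ ^ n * N) * f x ≤ f x * ∏ j, S j x := by
      intro x hx
      obtain ⟨hxA, hxg⟩ := Finset.mem_filter.mp hx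
      have hprod : ∏ j, (θ * ((E j).card : ℝ)) ≤ ∏ j, S j x :=
        Finset.prod_le_prod (fun j _ => mul_nonneg hθ0 (Nat.cast_nonneg _)) (fun j _ => hxg j)
      have hpe : ∏ j, (θ * ((E j).card : ℝ)) = θ ^ n * N := by
        rw [Finset.prod_mul_distrib, Finset.prod_const, hcardprod]
        simp
      rw [mul_comm (f x)]
      exact mul_le_mul_of_nonneg_right (hpe ▸ hprod) (hf0 x hxA)
    calc θ ^ n * N * (μ * N / 2) ≤ θ ^ n * N * ∑ x ∈ Good, f x := by
          have hc : 0 ≤ θ ^ n * N := mul_nonneg (pow_nonneg hθ0 n) hN0.le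
          exact mul_le_mul_of_nonneg_left hGoodSum hc
      _ = ∑ x ∈ Good, (θ ^ n * N) * f x := by rw [Finset.mul_sum]
      _ ≤ ∑ x ∈ Good, f x * ∏ j, S j x := Finset.sum_le_sum h2
      _ ≤ ∑ x ∈ A, f x * ∏ j, S j x := h1
  -- finish
  rw [hnum]
  have hfinal : (1 / (2 * (2 * (n:ℝ)) ^ n)) * μ ^ (n + 1)
      = (θ ^ n * N * (μ * N / 2)) / N ^ 2 := by
    rw [hθ]
    field_simp
    have key : (n:ℝ) ^ n * ((n:ℝ))⁻¹ ^ n * (1 / 2) ^ n * 2 ^ n = 1 := by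
      rw [← mul_pow, ← mul_pow, ← mul_pow]; norm_num [hn'.ne']
    linear_combination (-(μ * μ ^ n)) * key
  calc (1 / (2 * (2 * (n:ℝ)) ^ n)) * μ ^ (n + 1)
      = (θ ^ n * N * (μ * N / 2)) / N ^ 2 := hfinal
    _ ≤ (∑ x ∈ A, f x * ∏ j, S j x) / N ^ 2 := by gcongr
end

section
/- Let $q, L \geq 1$, let $f : \mathbb{Z} \to \mathbb{C}$ be $1$-bounded with support in an interval of length $N$, and let $h \in \mathbb{Z}$ with $|h| < q$. Then $\left| \|\mathbf{E}(f(\cdot + h) \mid \mathcal{B}_{(qL,q)})\|_2^2 - \|\mathbf{E}(f \mid \mathcal{B}_{(qL,q)})\|_2^2 \right| \leq 8 \frac{|h|}{q} N$. -/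
open scoped BigOperators

/-- Conditional expectation of `f` with respect to the partition with atom map `P`:
at each point, the average of `f` over the atom containing it. -/
noncomputable def condExp (P : ℤ → Set ℤ) (f : ℤ → ℂ) (x : ℤ) : ℂ :=
  (∑ᶠ y ∈ P x, f y) / (Nat.card (P x) : ℂ)

/-- Atom map of the partition `𝓑_{(qL,q)}` of `ℤ`: the common refinement of the
partition into intervals `(qLs, qL(s+1)]` and the residue classes mod `q`.
Its atoms are `{qLs + qk + r : 0 ≤ k < L}` for `s ∈ ℤ`, `0 < r ≤ q`. -/
def Bpart (q L : ℕ) (x : ℤ) : Set ℤ :=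
  {y | y % (q : ℤ) = x % (q : ℤ) ∧ (y - 1) / ((q : ℤ) * L) = (x - 1) / ((q : ℤ) * L)}

namespace CEBAP

lemma sum_Ioc_cons (f : ℤ → ℝ) {a b c : ℤ} (h1 : a ≤ b) (h2 : b ≤ c) :
    ∑ i ∈ Finset.Ioc a b, f i + ∑ i ∈ Finset.Ioc b c, f i = ∑ i ∈ Finset.Ioc a c, f i := by
  rw [← Finset.sum_union (by
      rw [Finset.disjoint_left]
      intro x hx hx'
      simp only [Finset.mem_Ioc] at hx hx'
      omega),
    Finset.Ioc_union_Ioc_eq_Ioc h1 h2]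

lemma sum_Ioc_eq_range (v : ℤ → ℝ) (c : ℤ) (n : ℕ) :
    ∑ x ∈ Finset.Ioc c (c + (n:ℤ)), v x = ∑ t ∈ Finset.range n, v (c + t + 1) := by
  induction n with
  | zero => simp
  | succ n ih =>
      have h1 : c ≤ c + (n:ℤ) := by omega
      have e1 : (c : ℤ) + ((n:ℕ)+1 : ℕ) = (c + (n:ℤ)) + 1 := by push_cast; ring
      rw [e1, ← sum_Ioc_cons v h1 (by omega : c + (n:ℤ) ≤ c + (n:ℤ) + 1)]
      rw [ih, Finset.sum_range_succ]
      congr 1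
      have e2 : Finset.Ioc (c + (n:ℤ)) (c + (n:ℤ) + 1) = {c + (n:ℤ) + 1} := by
        ext x; simp [Finset.mem_Ioc]; omega
      rw [e2, Finset.sum_singleton]

lemma sum_Ioc_blocks (v : ℤ → ℝ) (c : ℤ) (n d : ℕ) :
    ∑ x ∈ Finset.Ioc c (c + (n:ℤ)*(d:ℤ)), v x
      = ∑ j ∈ Finset.range d, ∑ t ∈ Finset.range n, v (c + (n:ℤ)*(j:ℤ) + (t:ℤ) + 1) := by
  induction d with
  | zero => simp
  | succ d ih =>
      have hn : (0:ℤ) ≤ (n:ℤ)*(d:ℤ) := by positivity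
      have e1 : c + (n:ℤ)*((d:ℕ)+1 : ℕ) = (c + (n:ℤ)*(d:ℤ)) + (n:ℤ) := by push_cast; ring
      rw [e1, ← sum_Ioc_cons v (by omega : c ≤ c + (n:ℤ)*(d:ℤ))
        (by omega : c + (n:ℤ)*(d:ℤ) ≤ c + (n:ℤ)*(d:ℤ) + (n:ℤ))]
      rw [ih, Finset.sum_range_succ, sum_Ioc_eq_range]

lemma sum_range_mul' (φ : ℕ → ℝ) (L q : ℕ) :
    ∑ t ∈ Finset.range (L*q), φ t
      = ∑ k ∈ Finset.range L, ∑ m ∈ Finset.range q, φ (q*k + m) := by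
  induction L with
  | zero => simp
  | succ L ih =>
      rw [Nat.succ_mul, Finset.sum_range_add, ih, Finset.sum_range_succ]
      congr 1
      apply Finset.sum_congr rfl
      intro m _
      congr 1
      ring

section Atoms

variable {q L : ℕ}

lemma edivHelper {Q M : ℤ} (hQ : 0 < Q) (hM : 0 < M) (s t : ℤ) (h0 : 0 ≤ t) (h1 : t < Q*M) :
    (Q*M*s + t) / (Q*M) = s := by
  have hQM : (0:ℤ) < Q*M := mul_pos hQ hM
  rw [add_comm, Int.add_mul_ediv_left t s (ne_of_gt hQM), Int.ediv_eq_zero_of_lt h0 h1, zero_add]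

lemma Bpart_eq (hq : 1 ≤ q) (hL : 1 ≤ L) (x : ℤ) :
    Bpart q L x = ↑((Finset.range L).image
      (fun k : ℕ => (q:ℤ)*(L:ℤ)*((x-1)/((q:ℤ)*(L:ℤ))) + (q:ℤ)*(k:ℤ) + ((x-1) % (q:ℤ) + 1))) := by
  have hQ : (0:ℤ) < (q:ℤ) := by exact_mod_cast hq
  have hM : (0:ℤ) < (L:ℤ) := by exact_mod_cast hL
  have hQM : (0:ℤ) < (q:ℤ)*(L:ℤ) := mul_pos hQ hM
  ext y
  simp only [Bpart, Set.mem_setOf_eq, Finset.coe_image, Set.mem_image, Finset.mem_coe,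
    Finset.mem_range]
  constructor
  · rintro ⟨h1, h2⟩
    set s := (x-1)/((q:ℤ)*(L:ℤ)) with hs
    set t := (y-1) % ((q:ℤ)*(L:ℤ)) with ht
    have ht0 : 0 ≤ t := Int.emod_nonneg _ (ne_of_gt hQM)
    have ht1 : t < (q:ℤ)*(L:ℤ) := Int.emod_lt_of_pos _ hQM
    have hy : y - 1 = (q:ℤ)*(L:ℤ)*s + t := by
      have := Int.mul_ediv_add_emod (y-1) ((q:ℤ)*(L:ℤ))
      rw [h2] at this
      omega
    set k := t / (q:ℤ) with hk
    have hdm : (q:ℤ)*k + t % (q:ℤ) = t := by rw [hk]; exact Int.mul_ediv_add_emod t (q:ℤ)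
    have hk0 : 0 ≤ k := Int.ediv_nonneg ht0 (le_of_lt hQ)
    have hkL : k < (L:ℤ) := by
      rw [hk, Int.ediv_lt_iff_lt_mul hQ]
      linarith [mul_comm (q:ℤ) (L:ℤ) ▸ ht1]
    have hm : t % (q:ℤ) = (x-1) % (q:ℤ) := by
      have e1 : t % (q:ℤ) = (y-1) % (q:ℤ) := by
        rw [ht]; exact Int.emod_emod_of_dvd _ (dvd_mul_right _ _)
      have e2 : (y-1) % (q:ℤ) = (x-1) % (q:ℤ) :=
        Int.ModEq.sub_right 1 (h1 : y % (q:ℤ) = x % (q:ℤ))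
      rw [e1, e2]
    refine ⟨k.toNat, ?_, ?_⟩
    · omega
    · have hkt : ((k.toNat : ℕ) : ℤ) = k := Int.toNat_of_nonneg hk0
      rw [hkt, ← hm]
      omega
  · rintro ⟨k, hkL, rfl⟩
    set s := (x-1)/((q:ℤ)*(L:ℤ)) with hs
    set m := (x-1) % (q:ℤ) with hm
    have hm0 : 0 ≤ m := Int.emod_nonneg _ (ne_of_gt hQ)
    have hm1 : m < (q:ℤ) := Int.emod_lt_of_pos _ hQ
    have hkZ : (k:ℤ) < (L:ℤ) := by exact_mod_cast hkL
    have hbound : 0 ≤ (q:ℤ)*(k:ℤ) + m ∧ (q:ℤ)*(k:ℤ) + m < (q:ℤ)*(L:ℤ) := by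
      constructor
      · positivity
      · have : (q:ℤ)*(k:ℤ) ≤ (q:ℤ)*((L:ℤ)-1) := by
          apply mul_le_mul_of_nonneg_left (by omega) (le_of_lt hQ)
        nlinarith
    constructor
    · have hx : (q:ℤ)*((x-1)/(q:ℤ)) + m = x - 1 := Int.mul_ediv_add_emod (x-1) (q:ℤ)
      have hdvd : (q:ℤ) ∣ x - ((q:ℤ)*(L:ℤ)*s + (q:ℤ)*(k:ℤ) + (m + 1)) := by
        refine ⟨(x-1)/(q:ℤ) - (L:ℤ)*s - (k:ℤ), by linear_combination -hx⟩
      have hmeq : ((q:ℤ)*(L:ℤ)*s + (q:ℤ)*(k:ℤ) + (m + 1)) ≡ x [ZMOD (q:ℤ)] := by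
        rw [Int.ModEq]
        exact (Int.modEq_iff_dvd.mpr hdvd)
      exact hmeq
    · have : (q:ℤ)*(L:ℤ)*s + (q:ℤ)*(k:ℤ) + (m + 1) - 1 = (q:ℤ)*(L:ℤ)*s + ((q:ℤ)*(k:ℤ) + m) := by
        ring
      rw [this, edivHelper hQ hM s _ hbound.1 hbound.2]


lemma Bpart_inj (hq : 1 ≤ q) (x : ℤ) : ∀ k1 ∈ Finset.range L, ∀ k2 ∈ Finset.range L,
    (fun k : ℕ => (q:ℤ)*(L:ℤ)*((x-1)/((q:ℤ)*(L:ℤ))) + (q:ℤ)*(k:ℤ) + ((x-1) % (q:ℤ) + 1)) k1 =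
    (fun k : ℕ => (q:ℤ)*(L:ℤ)*((x-1)/((q:ℤ)*(L:ℤ))) + (q:ℤ)*(k:ℤ) + ((x-1) % (q:ℤ) + 1)) k2 →
    k1 = k2 := by
  intro k1 _ k2 _ hk
  simp only [add_left_inj, add_right_inj] at hk
  have hQ : (0:ℤ) < (q:ℤ) := by exact_mod_cast hq
  have : (k1:ℤ) = (k2:ℤ) := by
    exact mul_left_cancel₀ (ne_of_gt hQ) hk
  exact_mod_cast this

lemma card_Bpart (hq : 1 ≤ q) (hL : 1 ≤ L) (x : ℤ) : Nat.card (Bpart q L x) = L := by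
  rw [Bpart_eq hq hL x]
  rw [Nat.card_coe_set_eq, Set.ncard_coe_finset]
  rw [Finset.card_image_of_injOn (fun k1 h1 k2 h2 => Bpart_inj hq x k1 h1 k2 h2)]
  exact Finset.card_range L

lemma condExp_eq (hq : 1 ≤ q) (hL : 1 ≤ L) (u : ℤ → ℂ) (x : ℤ) :
    condExp (Bpart q L) u x
      = (∑ k ∈ Finset.range L,
          u ((q:ℤ)*(L:ℤ)*((x-1)/((q:ℤ)*(L:ℤ))) + (q:ℤ)*(k:ℤ) + ((x-1) % (q:ℤ) + 1))) / (L:ℂ) := by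
  unfold condExp
  rw [card_Bpart hq hL x, Bpart_eq hq hL x, finsum_mem_coe_finset, Finset.sum_image (Bpart_inj hq x)]

lemma emod_helper {Q : ℤ} (s t k : ℤ) : (Q*s + (Q*k + t)) % Q = t % Q := by
  have : Q*s + (Q*k + t) = t + Q*(s+k) := by ring
  rw [this, Int.add_mul_emod_self_left]

lemma condExp_at (hq : 1 ≤ q) (hL : 1 ≤ L) (u : ℤ → ℂ) (s k' m : ℤ)
    (hk0 : 0 ≤ k') (hk1 : k' < (L:ℤ)) (hm0 : 0 ≤ m) (hm1 : m < (q:ℤ)) :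
    condExp (Bpart q L) u ((q:ℤ)*(L:ℤ)*s + ((q:ℤ)*k' + m) + 1)
      = (∑ k ∈ Finset.range L,
          u ((q:ℤ)*(L:ℤ)*s + (q:ℤ)*(k:ℤ) + (m + 1))) / (L:ℂ) := by
  have hQ : (0:ℤ) < (q:ℤ) := by exact_mod_cast hq
  have hM : (0:ℤ) < (L:ℤ) := by exact_mod_cast hL
  have ht0 : 0 ≤ (q:ℤ)*k' + m := by positivity
  have ht1 : (q:ℤ)*k' + m < (q:ℤ)*(L:ℤ) := by
    have h2 : (q:ℤ)*k' ≤ (q:ℤ)*((L:ℤ)-1) := mul_le_mul_of_nonneg_left (by omega) (le_of_lt hQ)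
    nlinarith
  have hx1 : ((q:ℤ)*(L:ℤ)*s + ((q:ℤ)*k' + m) + 1) - 1 = (q:ℤ)*(L:ℤ)*s + ((q:ℤ)*k' + m) := by ring
  rw [condExp_eq hq hL u _]
  rw [hx1, edivHelper hQ hM s _ ht0 ht1]
  have hx2 : ((q:ℤ)*(L:ℤ)*s + ((q:ℤ)*k' + m)) % (q:ℤ) = m := by
    have : (q:ℤ)*(L:ℤ)*s = (q:ℤ)*((L:ℤ)*s) := by ring
    rw [this, emod_helper ((L:ℤ)*s) m k', Int.emod_eq_of_lt hm0 hm1]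
  rw [hx2]

lemma condExp_support (hq : 1 ≤ q) (hL : 1 ≤ L) (u : ℤ → ℂ) (α β : ℤ)
    (hsupp : Function.support u ⊆ Set.Ioc α β) (x : ℤ)
    (hx : ‖condExp (Bpart q L) u x‖^2 ≠ 0) :
    α - (q:ℤ)*(L:ℤ) < x ∧ x ≤ β + (q:ℤ)*(L:ℤ) := by
  have hQ : (0:ℤ) < (q:ℤ) := by exact_mod_cast hq
  have hM : (0:ℤ) < (L:ℤ) := by exact_mod_cast hL
  have hQM : (0:ℤ) < (q:ℤ)*(L:ℤ) := mul_pos hQ hM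
  have hce : condExp (Bpart q L) u x ≠ 0 := by
    intro h0; rw [h0] at hx; simp at hx
  rw [condExp_eq hq hL u x] at hce
  have hsum : (∑ k ∈ Finset.range L,
      u ((q:ℤ)*(L:ℤ)*((x-1)/((q:ℤ)*(L:ℤ))) + (q:ℤ)*(k:ℤ) + ((x-1) % (q:ℤ) + 1))) ≠ 0 := by
    intro h0; rw [h0] at hce; simp at hce
  obtain ⟨k, hk, hne⟩ := Finset.exists_ne_zero_of_sum_ne_zero hsum
  have hy := hsupp hne
  simp only [Set.mem_Ioc] at hy
  set A := (q:ℤ)*(L:ℤ)*((x-1)/((q:ℤ)*(L:ℤ))) with hA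
  set B := (q:ℤ)*(k:ℤ) with hB
  set m := (x-1) % (q:ℤ) with hm
  have hm0 : 0 ≤ m := Int.emod_nonneg _ (ne_of_gt hQ)
  have hm1 : m < (q:ℤ) := Int.emod_lt_of_pos _ hQ
  have hB0 : 0 ≤ B := by positivity
  have hB1 : B ≤ (q:ℤ)*(L:ℤ) - (q:ℤ) := by
    have hkL : (k:ℤ) ≤ (L:ℤ) - 1 := by
      have : (k:ℕ) < L := Finset.mem_range.mp hk
      omega
    have := mul_le_mul_of_nonneg_left hkL (le_of_lt hQ)
    rw [hB]; nlinarith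
  set r := (x-1) % ((q:ℤ)*(L:ℤ)) with hr
  have hr0 : 0 ≤ r := Int.emod_nonneg _ (ne_of_gt hQM)
  have hr1 : r < (q:ℤ)*(L:ℤ) := Int.emod_lt_of_pos _ hQM
  have hxr : x - 1 = A + r := by
    have := Int.mul_ediv_add_emod (x-1) ((q:ℤ)*(L:ℤ))
    rw [hA, hr]; omega
  constructor
  · nlinarith [hy.1]
  · nlinarith [hy.2]

lemma master (hq : 1 ≤ q) (hL : 1 ≤ L) (u : ℤ → ℂ) (α β : ℤ)
    (hsupp : Function.support u ⊆ Set.Ioc α β) (j₀ : ℤ) (d : ℕ)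
    (hlo : (q:ℤ)*(L:ℤ)*j₀ ≤ α - (q:ℤ)*(L:ℤ))
    (hhi : β + (q:ℤ)*(L:ℤ) ≤ (q:ℤ)*(L:ℤ)*j₀ + (q:ℤ)*(L:ℤ)*(d:ℤ)) :
    ∑ᶠ x : ℤ, ‖condExp (Bpart q L) u x‖^2
      = (1/(L:ℝ)) * ∑ m ∈ Finset.range q, ∑ j ∈ Finset.range d,
          ‖∑ k ∈ Finset.range L, u ((q:ℤ)*(L:ℤ)*(j₀+(j:ℤ)) + (q:ℤ)*(k:ℤ) + ((m:ℤ)+1))‖^2 := by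
  have hQ : (0:ℤ) < (q:ℤ) := by exact_mod_cast hq
  have hM : (0:ℤ) < (L:ℤ) := by exact_mod_cast hL
  have hMR : (0:ℝ) < (L:ℝ) := by exact_mod_cast hL
  have hQM : (0:ℤ) < (q:ℤ)*(L:ℤ) := mul_pos hQ hM
  set c : ℤ := (q:ℤ)*(L:ℤ)*j₀ with hc
  have step1 : ∑ᶠ x : ℤ, ‖condExp (Bpart q L) u x‖^2
      = ∑ x ∈ Finset.Ioc c (c + ((q*L : ℕ):ℤ)*(d:ℤ)), ‖condExp (Bpart q L) u x‖^2 := by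
    apply finsum_eq_sum_of_support_subset
    intro x hx
    have hb := condExp_support hq hL u α β hsupp x hx
    simp only [Finset.coe_Ioc, Set.mem_Ioc]
    push_cast
    constructor
    · linarith [hb.1]
    · linarith [hb.2]
  rw [step1, sum_Ioc_blocks]
  have step2 : ∀ j ∈ Finset.range d,
      ∑ t ∈ Finset.range (q*L), ‖condExp (Bpart q L) u (c + ((q*L:ℕ):ℤ)*(j:ℤ) + (t:ℤ) + 1)‖^2
      = ∑ k ∈ Finset.range L, ∑ m ∈ Finset.range q,
          (‖∑ k' ∈ Finset.range L,
            u ((q:ℤ)*(L:ℤ)*(j₀+(j:ℤ)) + (q:ℤ)*(k':ℤ) + ((m:ℤ)+1))‖^2) / (L:ℝ)^2 := by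
    intro j _
    rw [show q*L = L*q from mul_comm q L, sum_range_mul']
    apply Finset.sum_congr rfl
    intro k _
    apply Finset.sum_congr rfl
    intro m _
    have harg : c + ((L*q:ℕ):ℤ)*(j:ℤ) + ((q*k+m : ℕ):ℤ) + 1
        = (q:ℤ)*(L:ℤ)*(j₀+(j:ℤ)) + ((q:ℤ)*(k:ℤ) + (m:ℤ)) + 1 := by
      push_cast; ring
    rw [harg, condExp_at hq hL u (j₀+(j:ℤ)) (k:ℤ) (m:ℤ) (by positivity)
      (by exact_mod_cast Finset.mem_range.mp (by assumption : k ∈ Finset.range L))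
      (by positivity)
      (by exact_mod_cast Finset.mem_range.mp (by assumption : m ∈ Finset.range q))]
    rw [norm_div, div_pow]
    congr 1
    rw [Complex.norm_natCast]
  rw [Finset.sum_congr rfl step2]
  have step3 : ∀ j ∈ Finset.range d,
      ∑ k ∈ Finset.range L, ∑ m ∈ Finset.range q,
          (‖∑ k' ∈ Finset.range L,
            u ((q:ℤ)*(L:ℤ)*(j₀+(j:ℤ)) + (q:ℤ)*(k':ℤ) + ((m:ℤ)+1))‖^2) / (L:ℝ)^2
      = (L:ℝ) * ∑ m ∈ Finset.range q,
          (‖∑ k' ∈ Finset.range L,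
            u ((q:ℤ)*(L:ℤ)*(j₀+(j:ℤ)) + (q:ℤ)*(k':ℤ) + ((m:ℤ)+1))‖^2) / (L:ℝ)^2 := by
    intro j _
    rw [Finset.sum_const, Finset.card_range, nsmul_eq_mul]
  rw [Finset.sum_congr rfl step3, ← Finset.mul_sum, Finset.sum_comm]
  have : ∑ m ∈ Finset.range q, ∑ j ∈ Finset.range d,
      (‖∑ k' ∈ Finset.range L,
        u ((q:ℤ)*(L:ℤ)*(j₀+(j:ℤ)) + (q:ℤ)*(k':ℤ) + ((m:ℤ)+1))‖^2) / (L:ℝ)^2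
      = (∑ m ∈ Finset.range q, ∑ j ∈ Finset.range d,
        ‖∑ k' ∈ Finset.range L,
          u ((q:ℤ)*(L:ℤ)*(j₀+(j:ℤ)) + (q:ℤ)*(k':ℤ) + ((m:ℤ)+1))‖^2) / (L:ℝ)^2 := by
    rw [Finset.sum_div]
    apply Finset.sum_congr rfl
    intro m _
    rw [Finset.sum_div]
  rw [this]
  field_simp

end Atoms


lemma normSq_step (τ g g' : ℂ) :
    ‖τ + g'‖^2 - ‖g + τ‖^2
      = (Complex.normSq g' - Complex.normSq g)
        + 2*((τ * (starRingEnd ℂ) g').re - (τ * (starRingEnd ℂ) g).re) := by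
  have h1 : ‖τ + g'‖^2 = Complex.normSq (τ + g') := by
    rw [Complex.sq_norm]
  have h2 : ‖g + τ‖^2 = Complex.normSq (τ + g) := by
    rw [add_comm g τ, Complex.sq_norm]
  rw [h1, h2, Complex.normSq_add, Complex.normSq_add]
  ring

lemma re_mul_conj_le (τ g : ℂ) : |(τ * (starRingEnd ℂ) g).re| ≤ ‖τ‖ * ‖g‖ := by
  calc |(τ * (starRingEnd ℂ) g).re| ≤ ‖τ * (starRingEnd ℂ) g‖ := Complex.abs_re_le_norm _
    _ = ‖τ‖ * ‖g‖ := by simp [norm_mul]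

lemma core (L : ℕ) (hL : 1 ≤ L) (F : ℤ → ℂ) (hF : ∀ i, ‖F i‖ ≤ 1) (b e : ℤ)
    (hs : ∀ i, F i ≠ 0 → b < i ∧ i ≤ e) (c₀ : ℤ) (d : ℕ)
    (hlo : c₀ ≤ b) (hhi : e < c₀ + (L:ℤ)*(d:ℤ)) :
    |∑ j ∈ Finset.range d, ‖∑ k ∈ Finset.range L, F (c₀ + (L:ℤ)*(j:ℤ) + 1 + (k:ℤ))‖^2
      - ∑ j ∈ Finset.range d, ‖∑ k ∈ Finset.range L, F (c₀ + (L:ℤ)*(j:ℤ) + (k:ℤ))‖^2|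
      ≤ 4 * (((e - b - 1).toNat : ℝ)) := by

  obtain ⟨P, rfl⟩ : ∃ P, L = P+1 := ⟨L-1, by omega⟩
  set M : ℤ := ((P:ℕ):ℤ) + 1 with hM
  have hcast : ((P+1 : ℕ):ℤ) = M := by push_cast; ring
  set g : ℕ → ℂ := fun j => F (c₀ + M*(j:ℤ)) with hg
  set τ : ℕ → ℂ := fun j => ∑ k ∈ Finset.range P, F (c₀ + M*(j:ℤ) + 1 + (k:ℤ)) with hτ
  have hSig : ∀ j : ℕ, ∑ k ∈ Finset.range (P+1), F (c₀ + ((P+1:ℕ):ℤ)*(j:ℤ) + (k:ℤ))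
      = g j + τ j := by
    intro j
    rw [Finset.sum_range_succ']
    have e1 : ∑ k ∈ Finset.range P, F (c₀ + ((P+1:ℕ):ℤ)*(j:ℤ) + ((k+1 : ℕ):ℤ)) = τ j := by
      apply Finset.sum_congr rfl
      intro k _
      first
      | rfl
      | (congr 1; push_cast; ring)
      | (congr 1; push_cast)
      | congr 1
    have e2 : F (c₀ + ((P+1:ℕ):ℤ)*(j:ℤ) + ((0:ℕ):ℤ)) = g j := by
      show F _ = F (c₀ + M*(j:ℤ))
      first
      | rfl
      | (congr 1; push_cast; ring)
      | (congr 1; push_cast)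
      | congr 1
    rw [e1, e2, add_comm]
  have hSig' : ∀ j : ℕ, ∑ k ∈ Finset.range (P+1), F (c₀ + ((P+1:ℕ):ℤ)*(j:ℤ) + 1 + (k:ℤ))
      = τ j + g (j+1) := by
    intro j
    rw [Finset.sum_range_succ]
    have e1 : ∑ k ∈ Finset.range P, F (c₀ + ((P+1:ℕ):ℤ)*(j:ℤ) + 1 + (k:ℤ)) = τ j := by
      apply Finset.sum_congr rfl
      intro k _
      first
      | rfl
      | (congr 1; push_cast; ring)
      | (congr 1; push_cast)
      | congr 1
    have e2 : F (c₀ + ((P+1:ℕ):ℤ)*(j:ℤ) + 1 + ((P:ℕ):ℤ)) = g (j+1) := by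
      show F _ = F (c₀ + M*((j+1:ℕ):ℤ))
      first
      | rfl
      | (congr 1; push_cast; ring)
      | (congr 1; push_cast)
      | congr 1
    rw [e1, e2]
  have hg0 : g 0 = 0 := by
    by_contra hne
    have := (hs _ hne).1
    simp only [Nat.cast_zero, mul_zero, add_zero] at this
    omega
  have hgd : g d = 0 := by
    by_contra hne
    have h2 := (hs _ hne).2
    have : c₀ + M*(d:ℤ) ≤ e := h2
    have hMd : M*(d:ℤ) = ((P+1:ℕ):ℤ)*(d:ℤ) := by push_cast; ring
    omega
  have key : ∑ j ∈ Finset.range d, ‖∑ k ∈ Finset.range (P+1), F (c₀ + ((P+1:ℕ):ℤ)*(j:ℤ) + 1 + (k:ℤ))‖^2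
      - ∑ j ∈ Finset.range d, ‖∑ k ∈ Finset.range (P+1), F (c₀ + ((P+1:ℕ):ℤ)*(j:ℤ) + (k:ℤ))‖^2
      = ∑ j ∈ Finset.range d,
          ((Complex.normSq (g (j+1)) - Complex.normSq (g j))
            + 2*((τ j * (starRingEnd ℂ) (g (j+1))).re - (τ j * (starRingEnd ℂ) (g j)).re)) := by
    rw [← Finset.sum_sub_distrib]
    apply Finset.sum_congr rfl
    intro j _
    rw [hSig j, hSig' j, normSq_step]
  have tele : ∑ j ∈ Finset.range d, (Complex.normSq (g (j+1)) - Complex.normSq (g j)) = 0 := by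
    rw [Finset.sum_range_sub (fun j => Complex.normSq (g j)) d, hg0, hgd]
    simp
  rw [key, Finset.sum_add_distrib, tele, zero_add]
  -- now bound the cross terms
  have hind : ∀ (S : Finset ℤ), ∑ p ∈ (Finset.range d) ×ˢ (Finset.range P),
      (if c₀ + M*(p.1:ℤ) + 1 + (p.2:ℤ) ∈ S then (1:ℝ) else 0) ≤ (S.card : ℝ) := by
    intro S
    rw [Finset.sum_boole]
    have hcard : (((Finset.range d) ×ˢ (Finset.range P)).filter
        (fun p => c₀ + M*(p.1:ℤ) + 1 + (p.2:ℤ) ∈ S)).card ≤ S.card := by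
      apply Finset.card_le_card_of_injOn (fun p => c₀ + M*(p.1:ℤ) + 1 + (p.2:ℤ))
      · intro p hp
        exact (Finset.mem_filter.mp hp).2
      · intro p hp p' hp' heq
        simp only [Finset.coe_filter, Set.mem_setOf_eq, Finset.mem_product,
          Finset.mem_range] at hp hp'
        simp only [] at heq
        have hk : (p.2:ℤ) < M := by
          have := hp.1.2; omega
        have hk' : (p'.2:ℤ) < M := by
          have := hp'.1.2; omega
        have hk0 : (0:ℤ) ≤ (p.2:ℤ) := by positivity
        have hk0' : (0:ℤ) ≤ (p'.2:ℤ) := by positivity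
        have hM0 : (0:ℤ) ≤ M := by omega
        have hjj : (p.1:ℤ) = (p'.1:ℤ) := by
          rcases lt_trichotomy (p.1:ℤ) (p'.1:ℤ) with hlt|heq'|hgt
          · exfalso
            have h5 : M*((p.1:ℤ)+1) ≤ M*(p'.1:ℤ) := mul_le_mul_of_nonneg_left (by omega) hM0
            have h6 : M*((p.1:ℤ)+1) = M*(p.1:ℤ) + M := by ring
            linarith
          · exact heq'
          · exfalso
            have h5 : M*((p'.1:ℤ)+1) ≤ M*(p.1:ℤ) := mul_le_mul_of_nonneg_left (by omega) hM0
            have h6 : M*((p'.1:ℤ)+1) = M*(p'.1:ℤ) + M := by ring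
            linarith
        have hj : p.1 = p'.1 := by exact_mod_cast hjj
        have hmul : M*(p.1:ℤ) = M*(p'.1:ℤ) := by rw [hjj]
        have hkk : p.2 = p'.2 := by
          have : (p.2:ℤ) = (p'.2:ℤ) := by linarith
          exact_mod_cast this
        exact Prod.ext hj hkk
    exact_mod_cast hcard
  have boundA : ∑ j ∈ Finset.range d, ‖τ j‖ * ‖g j‖ ≤ ((e - b - 1).toNat : ℝ) := by
    have h1 : ∑ j ∈ Finset.range d, ‖τ j‖ * ‖g j‖
        ≤ ∑ p ∈ (Finset.range d) ×ˢ (Finset.range P),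
          (if c₀ + M*(p.1:ℤ) + 1 + (p.2:ℤ) ∈ Finset.Ioc (b+1) e then (1:ℝ) else 0) := by
      rw [Finset.sum_product]
      apply Finset.sum_le_sum
      intro j _
      calc ‖τ j‖ * ‖g j‖ ≤ (∑ k ∈ Finset.range P, ‖F (c₀ + M*(j:ℤ) + 1 + (k:ℤ))‖) * ‖g j‖ := by
            apply mul_le_mul_of_nonneg_right (norm_sum_le _ _) (norm_nonneg _)
        _ = ∑ k ∈ Finset.range P, ‖F (c₀ + M*(j:ℤ) + 1 + (k:ℤ))‖ * ‖g j‖ := by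
            rw [Finset.sum_mul]
        _ ≤ ∑ k ∈ Finset.range P,
              (if c₀ + M*(j:ℤ) + 1 + (k:ℤ) ∈ Finset.Ioc (b+1) e then (1:ℝ) else 0) := by
            apply Finset.sum_le_sum
            intro k _
            by_cases hFi : F (c₀ + M*(j:ℤ) + 1 + (k:ℤ)) = 0
            · rw [hFi, norm_zero, zero_mul]
              split <;> norm_num
            · by_cases hgj : g j = 0
              · rw [hgj, norm_zero, mul_zero]
                split <;> norm_num
              · have h2 := hs _ hFi
                have h3 := hs _ hgj
                have hmem : c₀ + M*(j:ℤ) + 1 + (k:ℤ) ∈ Finset.Ioc (b+1) e := by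
                  rw [Finset.mem_Ioc]
                  have hk0 : (0:ℤ) ≤ (k:ℤ) := by positivity
                  constructor
                  · have := h3.1; omega
                  · exact h2.2
                rw [if_pos hmem]
                calc ‖F (c₀ + M*(j:ℤ) + 1 + (k:ℤ))‖ * ‖g j‖ ≤ 1 * 1 := by
                      apply mul_le_mul (hF _) (hF _) (norm_nonneg _) (by norm_num)
                  _ = 1 := by norm_num
    calc ∑ j ∈ Finset.range d, ‖τ j‖ * ‖g j‖ ≤ _ := h1
      _ ≤ ((Finset.Ioc (b+1) e).card : ℝ) := hind _
      _ = ((e - b - 1).toNat : ℝ) := by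
          rw [Int.card_Ioc]
          congr 1
          omega
  have boundB : ∑ j ∈ Finset.range d, ‖τ j‖ * ‖g (j+1)‖ ≤ ((e - b - 1).toNat : ℝ) := by
    have h1 : ∑ j ∈ Finset.range d, ‖τ j‖ * ‖g (j+1)‖
        ≤ ∑ p ∈ (Finset.range d) ×ˢ (Finset.range P),
          (if c₀ + M*(p.1:ℤ) + 1 + (p.2:ℤ) ∈ Finset.Ioc b (e-1) then (1:ℝ) else 0) := by
      rw [Finset.sum_product]
      apply Finset.sum_le_sum
      intro j _
      calc ‖τ j‖ * ‖g (j+1)‖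
          ≤ (∑ k ∈ Finset.range P, ‖F (c₀ + M*(j:ℤ) + 1 + (k:ℤ))‖) * ‖g (j+1)‖ := by
            apply mul_le_mul_of_nonneg_right (norm_sum_le _ _) (norm_nonneg _)
        _ = ∑ k ∈ Finset.range P, ‖F (c₀ + M*(j:ℤ) + 1 + (k:ℤ))‖ * ‖g (j+1)‖ := by
            rw [Finset.sum_mul]
        _ ≤ ∑ k ∈ Finset.range P,
              (if c₀ + M*(j:ℤ) + 1 + (k:ℤ) ∈ Finset.Ioc b (e-1) then (1:ℝ) else 0) := by
            apply Finset.sum_le_sum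
            intro k hk
            by_cases hFi : F (c₀ + M*(j:ℤ) + 1 + (k:ℤ)) = 0
            · rw [hFi, norm_zero, zero_mul]
              split <;> norm_num
            · by_cases hgj : g (j+1) = 0
              · rw [hgj, norm_zero, mul_zero]
                split <;> norm_num
              · have h2 := hs _ hFi
                have h3 := hs _ hgj
                have hmem : c₀ + M*(j:ℤ) + 1 + (k:ℤ) ∈ Finset.Ioc b (e-1) := by
                  rw [Finset.mem_Ioc]
                  have hkP : (k:ℤ) ≤ (P:ℤ) - 1 := by
                    have := Finset.mem_range.mp hk; omega
                  have h31 : c₀ + M*((j:ℤ)+1) ≤ e := by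
                    have := h3.2
                    have hc : ((j+1 : ℕ):ℤ) = (j:ℤ)+1 := by push_cast; ring
                    rw [hc] at this
                    exact this
                  have hMj : M*((j:ℤ)+1) = M*(j:ℤ) + M := by ring
                  constructor
                  · exact lt_of_lt_of_le h2.1 (by omega)
                  · omega
                rw [if_pos hmem]
                calc ‖F (c₀ + M*(j:ℤ) + 1 + (k:ℤ))‖ * ‖g (j+1)‖ ≤ 1 * 1 := by
                      apply mul_le_mul (hF _) (hF _) (norm_nonneg _) (by norm_num)
                  _ = 1 := by norm_num
    calc ∑ j ∈ Finset.range d, ‖τ j‖ * ‖g (j+1)‖ ≤ _ := h1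
      _ ≤ ((Finset.Ioc b (e-1)).card : ℝ) := hind _
      _ = ((e - b - 1).toNat : ℝ) := by
          rw [Int.card_Ioc]
          congr 1
          omega
  calc |∑ j ∈ Finset.range d,
        2*((τ j * (starRingEnd ℂ) (g (j+1))).re - (τ j * (starRingEnd ℂ) (g j)).re)|
      ≤ ∑ j ∈ Finset.range d,
        |2*((τ j * (starRingEnd ℂ) (g (j+1))).re - (τ j * (starRingEnd ℂ) (g j)).re)| :=
        Finset.abs_sum_le_sum_abs _ _
    _ ≤ ∑ j ∈ Finset.range d, (2*(‖τ j‖ * ‖g (j+1)‖) + 2*(‖τ j‖ * ‖g j‖)) := by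
        apply Finset.sum_le_sum
        intro j _
        have h1 := re_mul_conj_le (τ j) (g (j+1))
        have h2 := re_mul_conj_le (τ j) (g j)
        have h3 := abs_sub ((τ j * (starRingEnd ℂ) (g (j+1))).re) ((τ j * (starRingEnd ℂ) (g j)).re)
        rw [abs_mul]
        have : |(2:ℝ)| = 2 := by norm_num
        rw [this]
        nlinarith [abs_abs ((τ j * (starRingEnd ℂ) (g (j+1))).re)]
    _ = 2 * (∑ j ∈ Finset.range d, ‖τ j‖ * ‖g (j+1)‖)
        + 2 * (∑ j ∈ Finset.range d, ‖τ j‖ * ‖g j‖) := by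
        rw [Finset.sum_add_distrib, Finset.mul_sum, Finset.mul_sum]
    _ ≤ 2 * ((e - b - 1).toNat : ℝ) + 2 * ((e - b - 1).toNat : ℝ) := by
        have := boundA
        have := boundB
        gcongr
    _ = 4 * (((e - b - 1).toNat : ℝ)) := by ring

lemma core_eps (L : ℕ) (hL : 1 ≤ L) (F : ℤ → ℂ) (hF : ∀ i, ‖F i‖ ≤ 1) (b e : ℤ)
    (hs : ∀ i, F i ≠ 0 → b < i ∧ i ≤ e) (c₀ : ℤ) (d : ℕ)
    (hlo : c₀ ≤ b - 1) (hhi : e + 1 < c₀ + (L:ℤ)*(d:ℤ)) (ε : ℤ) (hε : ε = 1 ∨ ε = -1) :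
    |∑ j ∈ Finset.range d, ‖∑ k ∈ Finset.range L, F (c₀ + (L:ℤ)*(j:ℤ) + ε + (k:ℤ))‖^2
      - ∑ j ∈ Finset.range d, ‖∑ k ∈ Finset.range L, F (c₀ + (L:ℤ)*(j:ℤ) + (k:ℤ))‖^2|
      ≤ 4 * (((e - b - 1).toNat : ℝ)) := by
  rcases hε with rfl | rfl
  · exact core L hL F hF b e hs c₀ d (by omega) (by omega)
  · have hs' : ∀ i, F (i - 1) ≠ 0 → (b+1) < i ∧ i ≤ (e+1) := by
      intro i hi
      have := hs _ hi
      omega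
    have hcore := core L hL (fun i => F (i-1)) (fun i => hF _) (b+1) (e+1) hs' c₀ d
      (by omega) (by omega)
    have e1 : ∀ j : ℕ, (∑ k ∈ Finset.range L, F ((c₀ + (L:ℤ)*(j:ℤ) + 1 + (k:ℤ)) - 1))
        = ∑ k ∈ Finset.range L, F (c₀ + (L:ℤ)*(j:ℤ) + (k:ℤ)) := by
      intro j
      apply Finset.sum_congr rfl
      intro k _
      congr 1
      ring
    have e2 : ∀ j : ℕ, (∑ k ∈ Finset.range L, F ((c₀ + (L:ℤ)*(j:ℤ) + (k:ℤ)) - 1))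
        = ∑ k ∈ Finset.range L, F (c₀ + (L:ℤ)*(j:ℤ) + (-1) + (k:ℤ)) := by
      intro j
      apply Finset.sum_congr rfl
      intro k _
      congr 1
      ring
    simp only [e1, e2] at hcore
    have e3 : e + 1 - (b + 1) - 1 = e - b - 1 := by ring
    rw [e3] at hcore
    rw [abs_sub_comm]
    exact hcore

lemma eps_mem {Q : ℤ} (hQ : 0 < Q) (z : ℤ) (h1 : -Q ≤ z) (h2 : z < 2*Q) :
    z/Q = -1 ∨ z/Q = 0 ∨ z/Q = 1 := by
  have hle : z/Q ≤ (2*Q-1)/Q := Int.ediv_le_ediv hQ (by omega)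
  have h3 : (2*Q-1)/Q = 1 := by
    rw [show 2*Q-1 = Q-1 + Q*1 by ring, Int.add_mul_ediv_left _ _ (ne_of_gt hQ),
      Int.ediv_eq_zero_of_lt (by omega) (by omega)]
    norm_num
  have hge : (-Q)/Q ≤ z/Q := Int.ediv_le_ediv hQ h1
  have h4 : (-Q)/Q = -1 := by
    rw [show -Q = (-1)*Q by ring, Int.mul_ediv_cancel _ (ne_of_gt hQ)]
  omega

lemma mod_sub_mod (z w Q : ℤ) : ((z % Q) - w) % Q = (z - w) % Q := by
  rw [Int.sub_emod, Int.emod_emod_of_dvd _ dvd_rfl, ← Int.sub_emod]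

lemma mod_add_mod' (z w Q : ℤ) : ((z % Q) + w) % Q = (z + w) % Q := by
  rw [Int.add_emod, Int.emod_emod_of_dvd _ dvd_rfl, ← Int.add_emod]

lemma reindex (q : ℕ) (hq : 1 ≤ q) (h : ℤ) (A : ℤ → ℝ) :
    ∑ m ∈ Finset.range q, A (((m:ℤ)+h) % (q:ℤ)) = ∑ m ∈ Finset.range q, A ((m:ℤ)) := by
  have hQ : (0:ℤ) < (q:ℤ) := by exact_mod_cast hq
  refine Finset.sum_nbij' (fun m : ℕ => (((m:ℤ)+h) % (q:ℤ)).toNat)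
    (fun m : ℕ => (((m:ℤ)-h) % (q:ℤ)).toNat) ?_ ?_ ?_ ?_ ?_
  · intro m hm
    simp only [Finset.mem_range]
    have h0 := Int.emod_nonneg ((m:ℤ)+h) (ne_of_gt hQ)
    have h1 := Int.emod_lt_of_pos ((m:ℤ)+h) hQ
    omega
  · intro m hm
    simp only [Finset.mem_range]
    have h0 := Int.emod_nonneg ((m:ℤ)-h) (ne_of_gt hQ)
    have h1 := Int.emod_lt_of_pos ((m:ℤ)-h) hQ
    omega
  · intro m hm
    have h0 := Int.emod_nonneg ((m:ℤ)+h) (ne_of_gt hQ)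
    have hmq : (m:ℤ) < (q:ℤ) := by exact_mod_cast Finset.mem_range.mp hm
    have e1 : (((((m:ℤ)+h) % (q:ℤ)).toNat : ℤ)) = ((m:ℤ)+h) % (q:ℤ) := Int.toNat_of_nonneg h0
    have e3 : ((((((m:ℤ)+h) % (q:ℤ)).toNat : ℤ)) - h) % (q:ℤ) = (m:ℤ) := by
      rw [e1, mod_sub_mod]
      have e2 : ((m:ℤ)+h-h) = (m:ℤ) := by ring
      rw [e2, Int.emod_eq_of_lt (by positivity) hmq]
    omega
  · intro m hm
    have h0 := Int.emod_nonneg ((m:ℤ)-h) (ne_of_gt hQ)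
    have hmq : (m:ℤ) < (q:ℤ) := by exact_mod_cast Finset.mem_range.mp hm
    have e1 : (((((m:ℤ)-h) % (q:ℤ)).toNat : ℤ)) = ((m:ℤ)-h) % (q:ℤ) := Int.toNat_of_nonneg h0
    have e3 : ((((((m:ℤ)-h) % (q:ℤ)).toNat : ℤ)) + h) % (q:ℤ) = (m:ℤ) := by
      rw [e1, mod_add_mod']
      have e2 : ((m:ℤ)-h+h) = (m:ℤ) := by ring
      rw [e2, Int.emod_eq_of_lt (by positivity) hmq]
    omega
  · intro m hm
    congr 1
    have h0 := Int.emod_nonneg ((m:ℤ)+h) (ne_of_gt hQ)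
    exact (Int.toNat_of_nonneg h0).symm

lemma count_bad (q : ℕ) (hq : 1 ≤ q) (h : ℤ) (hh : |h| < (q:ℤ)) :
    ((Finset.range q).filter (fun m : ℕ => ((m:ℤ)+h)/(q:ℤ) ≠ 0)).card ≤ h.natAbs := by
  have hQ : (0:ℤ) < (q:ℤ) := by exact_mod_cast hq
  have habs := abs_lt.mp hh
  rcases le_or_gt 0 h with hpos | hneg
  · have hsub : ((Finset.range q).filter (fun m : ℕ => ((m:ℤ)+h)/(q:ℤ) ≠ 0))
        ⊆ Finset.Ico (q - h.toNat) q := by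
      intro m hm
      rw [Finset.mem_filter, Finset.mem_range] at hm
      rw [Finset.mem_Ico]
      refine ⟨?_, hm.1⟩
      by_contra hcon
      have hmq : (m:ℤ) < (q:ℤ) - h := by omega
      have : ((m:ℤ)+h)/(q:ℤ) = 0 := Int.ediv_eq_zero_of_lt (by omega) (by omega)
      exact hm.2 this
    calc _ ≤ (Finset.Ico (q - h.toNat) q).card := Finset.card_le_card hsub
      _ = q - (q - h.toNat) := Nat.card_Ico _ _
      _ ≤ h.natAbs := by omega
  · have hsub : ((Finset.range q).filter (fun m : ℕ => ((m:ℤ)+h)/(q:ℤ) ≠ 0))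
        ⊆ Finset.range h.natAbs := by
      intro m hm
      rw [Finset.mem_filter, Finset.mem_range] at hm
      rw [Finset.mem_range]
      by_contra hcon
      have hm0 : (0:ℤ) ≤ (m:ℤ) + h := by omega
      have hmq : (m:ℤ) + h < (q:ℤ) := by omega
      exact hm.2 (Int.ediv_eq_zero_of_lt hm0 hmq)
    calc _ ≤ (Finset.range h.natAbs).card := Finset.card_le_card hsub
      _ = h.natAbs := Finset.card_range _

lemma perclass (q L : ℕ) (hq : 1 ≤ q) (hL : 1 ≤ L) (f : ℤ → ℂ) (hbd : ∀ x, ‖f x‖ ≤ 1)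
    (a : ℤ) (N : ℕ) (hsupp : Function.support f ⊆ Set.Ioc a (a + (N:ℤ)))
    (c : ℤ) (hc0 : 0 ≤ c) (hc1 : c < (q:ℤ)) (ε : ℤ) (hε : ε = 1 ∨ ε = -1)
    (c₀ : ℤ) (d : ℕ)
    (hlo : (q:ℤ)*c₀ ≤ a - 3*(q:ℤ))
    (hhi : a + (N:ℤ) + (q:ℤ) ≤ (q:ℤ)*c₀ + (q:ℤ)*((L:ℤ)*(d:ℤ))) :
    |∑ j ∈ Finset.range d, ‖∑ k ∈ Finset.range L,
        f ((q:ℤ)*(c₀ + (L:ℤ)*(j:ℤ) + ε + (k:ℤ)) + c + 1)‖^2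
      - ∑ j ∈ Finset.range d, ‖∑ k ∈ Finset.range L,
        f ((q:ℤ)*(c₀ + (L:ℤ)*(j:ℤ) + (k:ℤ)) + c + 1)‖^2|
      ≤ 4 * ((N:ℝ) / (q:ℝ)) := by
  have hQ : (0:ℤ) < (q:ℤ) := by exact_mod_cast hq
  have hQR : (0:ℝ) < (q:ℝ) := by exact_mod_cast hq
  set F : ℤ → ℂ := fun i => f ((q:ℤ)*i + c + 1) with hFdef
  set b : ℤ := (a - c - 1) / (q:ℤ) with hb
  set e : ℤ := (a + (N:ℤ) - c - 1) / (q:ℤ) with he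
  have hb1 : (q:ℤ)*b ≤ a - c - 1 := by
    have := Int.ediv_mul_le (a - c - 1) (ne_of_gt hQ)
    rw [hb]; linarith [mul_comm ((a - c - 1) / (q:ℤ)) (q:ℤ)]
  have hb2 : a - c - 1 < (q:ℤ)*b + (q:ℤ) := by
    have := Int.lt_ediv_add_one_mul_self (a - c - 1) hQ
    rw [hb]; nlinarith
  have he1 : (q:ℤ)*e ≤ a + (N:ℤ) - c - 1 := by
    have := Int.ediv_mul_le (a + (N:ℤ) - c - 1) (ne_of_gt hQ)
    rw [he]; linarith [mul_comm ((a + (N:ℤ) - c - 1) / (q:ℤ)) (q:ℤ)]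
  have he2 : a + (N:ℤ) - c - 1 < (q:ℤ)*e + (q:ℤ) := by
    have := Int.lt_ediv_add_one_mul_self (a + (N:ℤ) - c - 1) hQ
    rw [he]; nlinarith
  have hs : ∀ i, F i ≠ 0 → b < i ∧ i ≤ e := by
    intro i hi
    have hmem := hsupp hi
    simp only [Set.mem_Ioc] at hmem
    constructor
    · by_contra hcon
      push_neg at hcon
      have : (q:ℤ)*i ≤ (q:ℤ)*b := mul_le_mul_of_nonneg_left hcon (le_of_lt hQ)
      omega
    · by_contra hcon
      push_neg at hcon
      have : (q:ℤ)*(e+1) ≤ (q:ℤ)*i := mul_le_mul_of_nonneg_left (by omega) (le_of_lt hQ)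
      nlinarith
  have hlo' : c₀ ≤ b - 1 := by
    by_contra hcon
    push_neg at hcon
    have : (q:ℤ)*b ≤ (q:ℤ)*c₀ := mul_le_mul_of_nonneg_left (by omega) (le_of_lt hQ)
    omega
  have hhi' : e + 1 < c₀ + (L:ℤ)*(d:ℤ) := by
    by_contra hcon
    push_neg at hcon
    have : (q:ℤ)*(c₀ + (L:ℤ)*(d:ℤ)) ≤ (q:ℤ)*(e+1) :=
      mul_le_mul_of_nonneg_left hcon (le_of_lt hQ)
    nlinarith
  have H := core_eps L hL F (fun i => hbd _) b e hs c₀ d hlo' hhi' ε hε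
  have hbound : 4 * (((e - b - 1).toNat : ℝ)) ≤ 4 * ((N:ℝ) / (q:ℝ)) := by
    have key : (q:ℤ)*(e - b - 1) ≤ (N:ℤ) := by nlinarith
    rcases le_or_gt (e - b - 1) 0 with hle | hgt
    · have : ((e - b - 1).toNat : ℝ) = 0 := by
        norm_cast
        omega
      rw [this]
      have : (0:ℝ) ≤ (N:ℝ) / (q:ℝ) := by positivity
      linarith
    · have htn : ((e - b - 1).toNat : ℝ) = (((e - b - 1) : ℤ) : ℝ) := by
        norm_cast
        omega
      rw [htn]
      have : (((e - b - 1) : ℤ) : ℝ) ≤ (N:ℝ) / (q:ℝ) := by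
        rw [le_div_iff₀ hQR]
        have : ((q:ℤ)*(e-b-1) : ℝ) ≤ ((N:ℤ) : ℝ) := by exact_mod_cast key
        push_cast at this ⊢
        linarith
      linarith
  calc |∑ j ∈ Finset.range d, ‖∑ k ∈ Finset.range L,
        f ((q:ℤ)*(c₀ + (L:ℤ)*(j:ℤ) + ε + (k:ℤ)) + c + 1)‖^2
      - ∑ j ∈ Finset.range d, ‖∑ k ∈ Finset.range L,
        f ((q:ℤ)*(c₀ + (L:ℤ)*(j:ℤ) + (k:ℤ)) + c + 1)‖^2|
      = |∑ j ∈ Finset.range d, ‖∑ k ∈ Finset.range L, F (c₀ + (L:ℤ)*(j:ℤ) + ε + (k:ℤ))‖^2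
        - ∑ j ∈ Finset.range d, ‖∑ k ∈ Finset.range L, F (c₀ + (L:ℤ)*(j:ℤ) + (k:ℤ))‖^2| := by
        rw [hFdef]
    _ ≤ 4 * (((e - b - 1).toNat : ℝ)) := H
    _ ≤ 4 * ((N:ℝ) / (q:ℝ)) := hbound


end CEBAP

set_option maxHeartbeats 2000000 in
open CEBAP in
theorem condExp_Bpart_almost_periodicity (q L N : ℕ) (hq : 1 ≤ q) (hL : 1 ≤ L)
    (f : ℤ → ℂ) (hbd : ∀ x, ‖f x‖ ≤ 1) (a : ℤ)
    (hsupp : Function.support f ⊆ Set.Ioc a (a + N))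
    (h : ℤ) (hh : |h| < (q : ℤ)) :
    |(∑ᶠ x : ℤ, ‖condExp (Bpart q L) (fun y => f (y + h)) x‖ ^ 2)
        - (∑ᶠ x : ℤ, ‖condExp (Bpart q L) f x‖ ^ 2)|
      ≤ 8 * (((|h| : ℤ) : ℝ) / (q : ℝ)) * (N : ℝ) := by
  have hQ : (0:ℤ) < (q:ℤ) := by exact_mod_cast hq
  have hQR : (0:ℝ) < (q:ℝ) := by exact_mod_cast hq
  have hLR : (1:ℝ) ≤ (L:ℝ) := by exact_mod_cast hL
  have hMZ : (1:ℤ) ≤ (L:ℤ) := by exact_mod_cast hL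
  have habs := abs_lt.mp hh
  have hQMpos : (0:ℤ) < (q:ℤ)*(L:ℤ) := by positivity
  set α : ℤ := a - (q:ℤ) with hα
  set β : ℤ := a + (N:ℤ) + (q:ℤ) with hβ
  have hsf : Function.support f ⊆ Set.Ioc α β := by
    intro x hx
    have := hsupp hx
    simp only [Set.mem_Ioc] at this ⊢
    omega
  have hsg : Function.support (fun y => f (y + h)) ⊆ Set.Ioc α β := by
    intro x hx
    have hx' : f (x + h) ≠ 0 := hx
    have := hsupp hx'
    simp only [Set.mem_Ioc] at this ⊢
    omega
  set j₀ : ℤ := α / ((q:ℤ)*(L:ℤ)) - 2 with hj₀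
  set d : ℕ := N + 2*q + 6 with hd
  have hdc : (d:ℤ) = (N:ℤ) + 2*(q:ℤ) + 6 := by rw [hd]; push_cast; ring
  have hdm1 : (q:ℤ)*(L:ℤ)*(α/((q:ℤ)*(L:ℤ))) ≤ α := by
    have := Int.ediv_mul_le α (ne_of_gt hQMpos)
    linarith [mul_comm (α/((q:ℤ)*(L:ℤ))) ((q:ℤ)*(L:ℤ))]
  have hdm2 : α < (q:ℤ)*(L:ℤ)*(α/((q:ℤ)*(L:ℤ))) + (q:ℤ)*(L:ℤ) := by
    have := Int.lt_ediv_add_one_mul_self α hQMpos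
    nlinarith
  have hj₀e : (q:ℤ)*(L:ℤ)*j₀ = (q:ℤ)*(L:ℤ)*(α/((q:ℤ)*(L:ℤ))) - 2*((q:ℤ)*(L:ℤ)) := by
    rw [hj₀]; ring
  have hkey : (0:ℤ) ≤ ((q:ℤ)*(L:ℤ) - 1) * ((N:ℤ) + 2*(q:ℤ)) :=
    mul_nonneg (by omega) (by positivity)
  have hd1 : (N:ℤ) + 2*(q:ℤ) + 6*((q:ℤ)*(L:ℤ)) ≤ ((q:ℤ)*(L:ℤ))*(d:ℤ) := by
    rw [hdc]
    nlinarith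
  have hQleQM : (q:ℤ) ≤ (q:ℤ)*(L:ℤ) := by nlinarith
  have hlo : (q:ℤ)*(L:ℤ)*j₀ ≤ α - (q:ℤ)*(L:ℤ) := by
    linarith
  have hhi : β + (q:ℤ)*(L:ℤ) ≤ (q:ℤ)*(L:ℤ)*j₀ + (q:ℤ)*(L:ℤ)*(d:ℤ) := by
    have hb : β = α + (N:ℤ) + 2*(q:ℤ) := by rw [hβ, hα]; ring
    linarith
  have Sf := master hq hL f α β hsf j₀ d hlo hhi
  have Sg := master hq hL (fun y => f (y+h)) α β hsg j₀ d hlo hhi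
  set c₀ : ℤ := (L:ℤ)*j₀ with hc₀
  have hpc1 : (q:ℤ)*c₀ ≤ a - 3*(q:ℤ) := by
    have h1 : (q:ℤ)*c₀ = (q:ℤ)*(L:ℤ)*j₀ := by rw [hc₀]; ring
    have h2 : α = a - (q:ℤ) := hα
    linarith
  have hpc2 : a + (N:ℤ) + (q:ℤ) ≤ (q:ℤ)*c₀ + (q:ℤ)*((L:ℤ)*(d:ℤ)) := by
    have h1 : (q:ℤ)*c₀ + (q:ℤ)*((L:ℤ)*(d:ℤ)) = (q:ℤ)*(L:ℤ)*j₀ + ((q:ℤ)*(L:ℤ))*(d:ℤ) := by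
      rw [hc₀]; ring
    have h2 : (q:ℤ)*(L:ℤ)*j₀ ≥ α - 3*((q:ℤ)*(L:ℤ)) + 1 := by linarith
    have h3 : α = a - (q:ℤ) := hα
    linarith
  have SgEq : ∑ᶠ (x:ℤ), ‖condExp (Bpart q L) (fun y => f (y+h)) x‖^2
      = (1/(L:ℝ)) * ∑ m ∈ Finset.range q, ∑ j ∈ Finset.range d,
          ‖∑ k ∈ Finset.range L,
            f ((q:ℤ)*(c₀ + (L:ℤ)*(j:ℤ) + (((m:ℤ)+h)/(q:ℤ)) + (k:ℤ))
              + (((m:ℤ)+h) % (q:ℤ)) + 1)‖^2 := by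
    rw [Sg]
    congr 1
    apply Finset.sum_congr rfl
    intro m _
    apply Finset.sum_congr rfl
    intro j _
    congr 2
    apply Finset.sum_congr rfl
    intro k _
    show f ((q:ℤ)*(L:ℤ)*(j₀+(j:ℤ)) + (q:ℤ)*(k:ℤ) + ((m:ℤ)+1) + h) = _
    congr 1
    have hQc := Int.mul_ediv_add_emod ((m:ℤ)+h) (q:ℤ)
    rw [hc₀]
    linear_combination -hQc
  have SfEq : ∑ᶠ (x:ℤ), ‖condExp (Bpart q L) f x‖^2
      = (1/(L:ℝ)) * ∑ m ∈ Finset.range q, ∑ j ∈ Finset.range d,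
          ‖∑ k ∈ Finset.range L,
            f ((q:ℤ)*(c₀ + (L:ℤ)*(j:ℤ) + (k:ℤ)) + ((m:ℤ)) + 1)‖^2 := by
    rw [Sf]
    congr 1
    apply Finset.sum_congr rfl
    intro m _
    apply Finset.sum_congr rfl
    intro j _
    congr 2
    apply Finset.sum_congr rfl
    intro k _
    congr 1
    rw [hc₀]
    ring
  have hre := reindex q hq h (fun t => ∑ j ∈ Finset.range d,
      ‖∑ k ∈ Finset.range L, f ((q:ℤ)*(c₀ + (L:ℤ)*(j:ℤ) + (k:ℤ)) + t + 1)‖^2)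
  have SfEq2 : ∑ᶠ (x:ℤ), ‖condExp (Bpart q L) f x‖^2
      = (1/(L:ℝ)) * ∑ m ∈ Finset.range q, ∑ j ∈ Finset.range d,
          ‖∑ k ∈ Finset.range L,
            f ((q:ℤ)*(c₀ + (L:ℤ)*(j:ℤ) + (k:ℤ)) + (((m:ℤ)+h) % (q:ℤ)) + 1)‖^2 := by
    rw [SfEq, hre]
  rw [SgEq, SfEq2, ← mul_sub, ← Finset.sum_sub_distrib, abs_mul,
    abs_of_nonneg (by positivity : (0:ℝ) ≤ 1/(L:ℝ))]
  have hper : ∀ m ∈ Finset.range q,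
      |(∑ j ∈ Finset.range d, ‖∑ k ∈ Finset.range L,
          f ((q:ℤ)*(c₀ + (L:ℤ)*(j:ℤ) + (((m:ℤ)+h)/(q:ℤ)) + (k:ℤ))
            + (((m:ℤ)+h) % (q:ℤ)) + 1)‖^2)
        - ∑ j ∈ Finset.range d, ‖∑ k ∈ Finset.range L,
          f ((q:ℤ)*(c₀ + (L:ℤ)*(j:ℤ) + (k:ℤ)) + (((m:ℤ)+h) % (q:ℤ)) + 1)‖^2|
      ≤ (if ((m:ℤ)+h)/(q:ℤ) ≠ 0 then 4*((N:ℝ)/(q:ℝ)) else 0) := by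
    intro m hm
    have hmq : (m:ℤ) < (q:ℤ) := by exact_mod_cast Finset.mem_range.mp hm
    by_cases hz : ((m:ℤ)+h)/(q:ℤ) = 0
    · rw [if_neg (by simpa using hz)]
      have heq : (∑ j ∈ Finset.range d, ‖∑ k ∈ Finset.range L,
          f ((q:ℤ)*(c₀ + (L:ℤ)*(j:ℤ) + (((m:ℤ)+h)/(q:ℤ)) + (k:ℤ))
            + (((m:ℤ)+h) % (q:ℤ)) + 1)‖^2)
          = ∑ j ∈ Finset.range d, ‖∑ k ∈ Finset.range L,
            f ((q:ℤ)*(c₀ + (L:ℤ)*(j:ℤ) + (k:ℤ)) + (((m:ℤ)+h) % (q:ℤ)) + 1)‖^2 := by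
        apply Finset.sum_congr rfl
        intro j _
        congr 2
        apply Finset.sum_congr rfl
        intro k _
        congr 1
        rw [hz]
        ring
      rw [heq, sub_self, abs_zero]
    · rw [if_pos (by simpa using hz)]
      have hc0 : 0 ≤ ((m:ℤ)+h) % (q:ℤ) := Int.emod_nonneg _ (ne_of_gt hQ)
      have hc1 : ((m:ℤ)+h) % (q:ℤ) < (q:ℤ) := Int.emod_lt_of_pos _ hQ
      have hεm := eps_mem hQ ((m:ℤ)+h) (by omega) (by omega)
      have hε : ((m:ℤ)+h)/(q:ℤ) = 1 ∨ ((m:ℤ)+h)/(q:ℤ) = -1 := by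
        rcases hεm with h1 | h2 | h3
        · exact Or.inr h1
        · exact absurd h2 hz
        · exact Or.inl h3
      exact perclass q L hq hL f hbd a N hsupp (((m:ℤ)+h) % (q:ℤ)) hc0 hc1
        (((m:ℤ)+h)/(q:ℤ)) hε c₀ d hpc1 hpc2
  have hcount := count_bad q hq h hh
  calc (1/(L:ℝ)) * |∑ m ∈ Finset.range q, ((∑ j ∈ Finset.range d, ‖∑ k ∈ Finset.range L,
          f ((q:ℤ)*(c₀ + (L:ℤ)*(j:ℤ) + (((m:ℤ)+h)/(q:ℤ)) + (k:ℤ))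
            + (((m:ℤ)+h) % (q:ℤ)) + 1)‖^2)
        - ∑ j ∈ Finset.range d, ‖∑ k ∈ Finset.range L,
          f ((q:ℤ)*(c₀ + (L:ℤ)*(j:ℤ) + (k:ℤ)) + (((m:ℤ)+h) % (q:ℤ)) + 1)‖^2)|
      ≤ (1/(L:ℝ)) * ∑ m ∈ Finset.range q,
          (if ((m:ℤ)+h)/(q:ℤ) ≠ 0 then 4*((N:ℝ)/(q:ℝ)) else 0) := by
        apply mul_le_mul_of_nonneg_left _ (by positivity)
        refine le_trans (Finset.abs_sum_le_sum_abs _ _) (Finset.sum_le_sum hper)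
    _ = (1/(L:ℝ)) * ((((Finset.range q).filter
          (fun m : ℕ => ((m:ℤ)+h)/(q:ℤ) ≠ 0)).card : ℝ) * (4*((N:ℝ)/(q:ℝ)))) := by
        congr 1
        rw [← Finset.sum_filter, Finset.sum_const, nsmul_eq_mul]
    _ ≤ 1 * (((h.natAbs : ℕ) : ℝ) * (4*((N:ℝ)/(q:ℝ)))) := by
        apply mul_le_mul
        · rw [div_le_one (by linarith)]
          linarith
        · apply mul_le_mul_of_nonneg_right _ (by positivity)
          exact_mod_cast hcount
        · positivity
        · norm_num
    _ ≤ 8 * (((|h| : ℤ) : ℝ) / (q : ℝ)) * (N : ℝ) := by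
        rw [one_mul]
        have hcast : ((|h| : ℤ) : ℝ) = ((h.natAbs : ℕ) : ℝ) :=
          (Nat.cast_natAbs (n := h)).symm
        rw [hcast]
        have hna : (0:ℝ) ≤ ((h.natAbs : ℕ) : ℝ) := by positivity
        have hNq : (0:ℝ) ≤ (N:ℝ)/(q:ℝ) := by positivity
        have he : ((h.natAbs : ℕ) : ℝ) * (4*((N:ℝ)/(q:ℝ)))
            = 4 * (((h.natAbs : ℕ) : ℝ)/(q:ℝ)) * (N:ℝ) := by
          field_simp
        rw [he]
        have hfin : (0:ℝ) ≤ (((h.natAbs : ℕ) : ℝ)/(q:ℝ)) * (N:ℝ) :=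
          mul_nonneg (div_nonneg hna hQR.le) (by positivity)
        nlinarith
end

section
/- Let $\delta \in (0,1)$, $M \geq 1$, let $I \subset \mathbb{Z}$ be an interval of length $M$, and let $(\mathcal{A}, \sigma)$ be a discrete probability space. Suppose for each $\alpha \in \mathcal{A}$ that $f_\alpha : \mathbb{Z} \to \mathbb{C}$ is $1$-bounded. If $M \geq 10\delta^{-2}$ and $\sum_{\alpha \in \mathcal{A}} \sigma(\alpha) \left| \mathbf{E}_{y \in I} f_\alpha(y) \right| \geq \delta$, then for every integer $1 \leq H \leq (\delta^2/4) M$ we have $\mathrm{Re}\left( \sum_{\alpha \in \mathcal{A}} \sum_{h \in \mathbb{Z}} \sigma(\alpha) \mu_H(h)\, \mathbf{E}_{y \in I} f_\alpha(y) \overline{f_\alpha(y+h)} \right) \geq \delta^2/4$. -/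
open scoped BigOperators

open Finset

/-- The Fejér kernel on `ℤ`: `μ_H(x) = (H - min(H,|x|))/H²`. -/
noncomputable def fejer (H : ℕ) (x : ℤ) : ℝ :=
  ((H : ℝ) - min (H : ℝ) (((|x| : ℤ) : ℝ))) / (H : ℝ) ^ 2

lemma fejer_nonneg (H : ℕ) (x : ℤ) : 0 ≤ fejer H x := by
  unfold fejer
  apply div_nonneg _ (by positivity)
  have : ((|x|:ℤ):ℝ) ≥ 0 := by positivity
  simp [min_le_iff]

lemma fejer_eq_zero (H : ℕ) (x : ℤ) (hx : (H:ℤ) ≤ |x|) : fejer H x = 0 := by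
  unfold fejer
  have : min (H:ℝ) ((|x|:ℤ):ℝ) = H := by
    apply min_eq_left
    exact_mod_cast hx
  rw [this]; simp

lemma cnt_eq (H : ℕ) (h : ℤ) (hh : h ∈ Finset.Icc (-(H:ℤ)) H) :
    ((((Finset.Icc (1:ℤ) H ×ˢ Finset.Icc (1:ℤ) H).filter fun p => p.2 - p.1 = h).card : ℤ))
      = (H:ℤ) - min (H:ℤ) |h| := by
  have hcard : ((Finset.Icc (1:ℤ) H ×ˢ Finset.Icc (1:ℤ) H).filter fun p => p.2 - p.1 = h).card
      = (Finset.Icc (max 1 (1-h)) (min (H:ℤ) ((H:ℤ)-h))).card := by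
    apply Finset.card_bij (fun p _ => p.1)
    · intro p hp
      simp only [mem_filter, mem_product, mem_Icc] at hp
      simp only [mem_Icc]
      omega
    · intro p hp q hq hpq
      simp only [mem_filter, mem_product, mem_Icc] at hp hq
      ext
      · exact hpq
      · omega
    · intro i hi
      simp only [mem_Icc] at hi
      refine ⟨(i, i + h), ?_, rfl⟩
      simp only [mem_filter, mem_product, mem_Icc]
      omega
  simp only [mem_Icc] at hh
  rw [hcard, Int.card_Icc]
  have : |h| = max h (-h) := abs_eq_max_neg
  omega

set_option maxHeartbeats 1000000 in
lemma key (H M : ℕ) (hH : 1 ≤ H) (hM : 1 ≤ M) (a₀ : ℤ) (f : ℤ → ℂ)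
    (hf : ∀ x, ‖f x‖ ≤ 1) :
    ‖∑ y ∈ Finset.Ioc a₀ (a₀ + (M:ℤ)), f y‖ ^ 2 / ((M:ℝ) * ((M:ℝ) + H)) - (2*(H:ℝ)+1)/(2*M) ≤
    (∑ h ∈ Finset.Icc (-(H:ℤ)) H, ((fejer H h : ℝ) : ℂ) *
      ((∑ y ∈ Finset.Ioc a₀ (a₀ + (M:ℤ)), f y * (starRingEnd ℂ) (f (y + h))) / (M : ℂ))).re := by
  classical
  set I : Finset ℤ := Finset.Ioc a₀ (a₀ + (M:ℤ)) with hI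
  set Y : Finset ℤ := Finset.Ioc (a₀ - (H:ℤ)) (a₀ + (M:ℤ)) with hY
  set F : ℤ → ℂ := fun y => if y ∈ I then f y else 0 with hF
  set S : ℂ := ∑ y ∈ I, f y with hS
  set c : ℤ → ℂ := fun h => ∑ y ∈ I, F y * (starRingEnd ℂ) (F (y + h)) with hc
  set g : ℤ → ℂ := fun y => ∑ i ∈ Finset.Icc (1:ℤ) (H:ℤ), F (y + i) with hg
  have hF0 : ∀ y, y ∉ I → F y = 0 := fun y hy => if_neg hy
  -- generic shift lemma
  have hshiftG : ∀ (G : ℤ → ℂ), (∀ y, y ∉ I → G y = 0) → ∀ i : ℤ, 0 ≤ i → i ≤ H →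
      ∑ y ∈ Y, G (y + i) = ∑ y ∈ I, G y := by
    intro G hG i hi0 hiH
    have h1 : ∑ y ∈ Y, G (y + i) = ∑ z ∈ Finset.Ioc (a₀ - H + i) (a₀ + M + i), G z := by
      rw [← Finset.map_add_right_Ioc]
      rw [Finset.sum_map]
      rfl
    rw [h1]
    refine (Finset.sum_subset ?_ ?_).symm
    · rw [hI]; apply Finset.Ioc_subset_Ioc <;> omega
    · intro y _ hy
      exact hG y hy
  -- Step: c as shifted sum
  have hcY : ∀ i : ℤ, i ∈ Finset.Icc (1:ℤ) H → ∀ j : ℤ, j ∈ Finset.Icc (1:ℤ) H →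
      ∑ y ∈ Y, F (y + i) * (starRingEnd ℂ) (F (y + j)) = c (j - i) := by
    intro i hi j hj
    simp only [mem_Icc] at hi hj
    have h2 : ∑ y ∈ Y, F (y + i) * (starRingEnd ℂ) (F ((y + i) + (j - i)))
        = ∑ y ∈ I, F y * (starRingEnd ℂ) (F (y + (j - i))) :=
      hshiftG (fun z => F z * (starRingEnd ℂ) (F (z + (j - i))))
        (fun y hy => by simp [hF0 y hy]) i (by omega) (by omega)
    simp only [hc]
    rw [← h2]
    apply Finset.sum_congr rfl
    intro y _
    ring_nf
  -- T identity
  have hT : ∑ y ∈ Y, g y * (starRingEnd ℂ) (g y)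
      = ∑ i ∈ Finset.Icc (1:ℤ) (H:ℤ), ∑ j ∈ Finset.Icc (1:ℤ) (H:ℤ), c (j - i) := by
    have expand : ∀ y, g y * (starRingEnd ℂ) (g y)
        = ∑ i ∈ Finset.Icc (1:ℤ) (H:ℤ), ∑ j ∈ Finset.Icc (1:ℤ) (H:ℤ),
            F (y + i) * (starRingEnd ℂ) (F (y + j)) := by
      intro y
      rw [hg]
      simp only [map_sum]
      rw [Finset.sum_mul_sum]
    rw [Finset.sum_congr rfl (fun y _ => expand y)]
    rw [Finset.sum_comm]
    apply Finset.sum_congr rfl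
    intro i hi
    rw [Finset.sum_comm]
    apply Finset.sum_congr rfl
    intro j hj
    exact hcY i hi j hj
  -- fiberwise
  have hfiber : ∑ i ∈ Finset.Icc (1:ℤ) (H:ℤ), ∑ j ∈ Finset.Icc (1:ℤ) (H:ℤ), c (j - i)
      = ∑ h ∈ Finset.Icc (-(H:ℤ)) H,
          (((((Finset.Icc (1:ℤ) H ×ˢ Finset.Icc (1:ℤ) H).filter fun p => p.2 - p.1 = h).card : ℕ)) : ℂ) * c h := by
    rw [← Finset.sum_product']
    rw [← Finset.sum_fiberwise_of_maps_to (g := fun p : ℤ × ℤ => p.2 - p.1)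
      (t := Finset.Icc (-(H:ℤ)) H) (fun p hp => by
        simp only [mem_product, mem_Icc] at hp ⊢; omega)]
    apply Finset.sum_congr rfl
    intro h _
    have e1 : ∀ p ∈ (Finset.Icc (1:ℤ) H ×ˢ Finset.Icc (1:ℤ) H).filter
        (fun p : ℤ×ℤ => p.2 - p.1 = h), c (p.2 - p.1) = c h :=
      fun p hp => by rw [(Finset.mem_filter.mp hp).2]
    rw [Finset.sum_congr rfl e1, Finset.sum_const, nsmul_eq_mul]
  -- fejer relates to cnt
  have hfejer : ∀ h ∈ Finset.Icc (-(H:ℤ)) H, ((fejer H h : ℝ) : ℂ)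
      = (((((Finset.Icc (1:ℤ) H ×ˢ Finset.Icc (1:ℤ) H).filter fun p => p.2 - p.1 = h).card : ℕ)) : ℂ) / (H:ℂ)^2 := by
    intro h hh
    have h1 : ((((Finset.Icc (1:ℤ) H ×ˢ Finset.Icc (1:ℤ) H).filter fun p => p.2 - p.1 = h).card : ℝ))
        = (H:ℝ) - min (H:ℝ) ((|h|:ℤ):ℝ) := by
      have := cnt_eq H h hh
      have h2 : ((((Finset.Icc (1:ℤ) H ×ˢ Finset.Icc (1:ℤ) H).filter fun p => p.2 - p.1 = h).card : ℤ) : ℝ)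
          = (((H:ℤ) - min (H:ℤ) |h| : ℤ) : ℝ) := by exact_mod_cast congrArg (Int.cast : ℤ → ℝ) this
      push_cast at h2 ⊢
      rw [h2]
    unfold fejer
    rw [← h1]
    push_cast
    ring
  -- main term equals real quantity
  set T : ℝ := ∑ y ∈ Y, Complex.normSq (g y) with hTdef
  have hTnonneg : 0 ≤ T := Finset.sum_nonneg fun y _ => Complex.normSq_nonneg _
  have hgconj : ∑ y ∈ Y, g y * (starRingEnd ℂ) (g y) = ((T : ℝ) : ℂ) := by
    rw [hTdef]
    push_cast
    apply Finset.sum_congr rfl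
    intro y _
    rw [Complex.mul_conj]
  have hmain : ∑ h ∈ Finset.Icc (-(H:ℤ)) H, ((fejer H h : ℝ) : ℂ) * (c h / (M:ℂ))
      = (((T / ((H:ℝ)^2 * M)) : ℝ) : ℂ) := by
    rw [Finset.sum_congr rfl (fun h hh => by rw [hfejer h hh])]
    have e2 : ∀ h ∈ Finset.Icc (-(H:ℤ)) H,
        (((((Finset.Icc (1:ℤ) H ×ˢ Finset.Icc (1:ℤ) H).filter fun p => p.2 - p.1 = h).card : ℕ)) : ℂ) / (H:ℂ)^2 * (c h / (M:ℂ))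
        = ((H:ℂ)^2 * (M:ℂ))⁻¹ * ((((((Finset.Icc (1:ℤ) H ×ˢ Finset.Icc (1:ℤ) H).filter fun p => p.2 - p.1 = h).card : ℕ)) : ℂ) * c h) := by
      intro h _
      field_simp
    rw [Finset.sum_congr rfl e2, ← Finset.mul_sum, ← hfiber, ← hT, hgconj]
    have hH0 : (H:ℂ) ≠ 0 := Nat.cast_ne_zero.mpr (by omega)
    have hM0 : (M:ℂ) ≠ 0 := Nat.cast_ne_zero.mpr (by omega)
    push_cast
    field_simp
  -- sum of g equals H * S
  have hgsum : ∑ y ∈ Y, g y = (H:ℂ) * S := by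
    rw [hg]
    simp only
    rw [Finset.sum_comm]
    have e3 : ∀ i ∈ Finset.Icc (1:ℤ) (H:ℤ), ∑ y ∈ Y, F (y + i) = S := by
      intro i hi
      simp only [mem_Icc] at hi
      rw [hshiftG F hF0 i (by omega) (by omega), hS]
      apply Finset.sum_congr rfl
      intro y hy
      exact if_pos hy
    rw [Finset.sum_congr rfl e3, Finset.sum_const, Int.card_Icc, nsmul_eq_mul]
    congr 1
    have : ((H:ℤ) + 1 - 1).toNat = H := by omega
    rw [this]
  -- Cauchy-Schwarz
  have hYcard : (Y.card : ℝ) = (M:ℝ) + H := by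
    rw [hY, Int.card_Ioc]
    have : (a₀ + (M:ℤ) - (a₀ - (H:ℤ))).toNat = M + H := by omega
    rw [this]
    push_cast
    ring
  have hCS : (H:ℝ)^2 * ‖S‖^2 ≤ ((M:ℝ) + H) * T := by
    have h1 : (H:ℝ) * ‖S‖ = ‖∑ y ∈ Y, g y‖ := by
      rw [hgsum, norm_mul]
      congr 1
      simp
    have h2 : ‖∑ y ∈ Y, g y‖ ≤ ∑ y ∈ Y, ‖g y‖ := norm_sum_le _ _
    have h3 : (∑ y ∈ Y, ‖g y‖)^2 ≤ (Y.card : ℝ) * ∑ y ∈ Y, ‖g y‖^2 := by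
      have := Finset.sum_mul_sq_le_sq_mul_sq Y (fun _ => (1:ℝ)) (fun y => ‖g y‖)
      simpa using this
    have h4 : ∑ y ∈ Y, ‖g y‖^2 = T := by
      rw [hTdef]
      apply Finset.sum_congr rfl
      intro y _
      rw [Complex.normSq_eq_norm_sq]
    have h5 : (0:ℝ) ≤ (H:ℝ) * ‖S‖ := by positivity
    have h6 : ((H:ℝ) * ‖S‖)^2 ≤ (Y.card : ℝ) * T := by
      rw [← h4]
      calc ((H:ℝ) * ‖S‖)^2 = ‖∑ y ∈ Y, g y‖^2 := by rw [h1]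
        _ ≤ (∑ y ∈ Y, ‖g y‖)^2 := by
            apply pow_le_pow_left₀ (norm_nonneg _) h2
        _ ≤ _ := h3
    rw [hYcard] at h6
    linarith [h6, mul_pow (H:ℝ) ‖S‖ 2]
  -- error term
  set c' : ℤ → ℂ := fun h => ∑ y ∈ I, f y * (starRingEnd ℂ) (f (y + h)) with hc'
  have hMposR : (0:ℝ) < M := by exact_mod_cast hM
  have hHposR : (0:ℝ) < H := by exact_mod_cast hH
  have herrh : ∀ h ∈ Finset.Icc (-(H:ℤ)) H, ‖c' h - c h‖ ≤ 2 * ((|h|:ℤ):ℝ) := by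
    intro h _
    have hsub : c' h - c h
        = ∑ y ∈ I.filter (fun y => y + h ∉ I), f y * (starRingEnd ℂ) (f (y + h)) := by
      rw [hc', hc]
      simp only
      rw [← Finset.sum_sub_distrib, Finset.sum_filter]
      apply Finset.sum_congr rfl
      intro y hy
      rw [hF]
      simp only
      rw [if_pos hy]
      by_cases hyh : y + h ∈ I
      · rw [if_pos hyh]
        simp [hyh]
      · rw [if_neg hyh]
        simp [hyh]
    have hcard : ((I.filter (fun y => y + h ∉ I)).card : ℝ) ≤ 2 * ((|h|:ℤ):ℝ) := by
      have hsubset : I.filter (fun y => y + h ∉ I)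
          ⊆ Finset.Ioc a₀ (a₀ + |h|) ∪ Finset.Ioc (a₀ + (M:ℤ) - |h|) (a₀ + (M:ℤ)) := by
        intro y hy
        simp only [mem_filter, hI, Finset.mem_Ioc, Finset.mem_union] at hy ⊢
        have h1 := le_abs_self h
        have h2 := neg_le_abs h
        omega
      have := Finset.card_le_card hsubset
      have h3 := Finset.card_union_le (Finset.Ioc a₀ (a₀ + |h|))
        (Finset.Ioc (a₀ + (M:ℤ) - |h|) (a₀ + (M:ℤ)))
      rw [Int.card_Ioc, Int.card_Ioc] at h3
      have h4 : (a₀ + |h| - a₀).toNat = |h|.toNat := by omega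
      have h5 : (a₀ + (M:ℤ) - (a₀ + (M:ℤ) - |h|)).toNat = |h|.toNat := by omega
      rw [h4, h5] at h3
      have h6 : (I.filter (fun y => y + h ∉ I)).card ≤ 2 * |h|.toNat := by omega
      have h7 : ((|h|.toNat : ℤ) : ℝ) = ((|h| : ℤ) : ℝ) := by
        congr 1
        exact Int.toNat_of_nonneg (abs_nonneg h)
      calc ((I.filter (fun y => y + h ∉ I)).card : ℝ) ≤ ((2 * |h|.toNat : ℕ) : ℝ) := by
            exact_mod_cast h6
        _ = 2 * ((|h|:ℤ):ℝ) := by rw [← h7]; push_cast; ring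
    rw [hsub]
    calc ‖∑ y ∈ I.filter (fun y => y + h ∉ I), f y * (starRingEnd ℂ) (f (y + h))‖
        ≤ ∑ y ∈ I.filter (fun y => y + h ∉ I), ‖f y * (starRingEnd ℂ) (f (y + h))‖ :=
          norm_sum_le _ _
      _ ≤ ∑ y ∈ I.filter (fun y => y + h ∉ I), 1 := by
          apply Finset.sum_le_sum
          intro y _
          rw [norm_mul, Complex.norm_conj]
          exact mul_le_one₀ (hf y) (norm_nonneg _) (hf (y + h))
      _ = ((I.filter (fun y => y + h ∉ I)).card : ℝ) := by
          rw [Finset.sum_const, nsmul_eq_mul, mul_one]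
      _ ≤ 2 * ((|h|:ℤ):ℝ) := hcard
  have herrterm : ∀ h ∈ Finset.Icc (-(H:ℤ)) H,
      ‖((fejer H h : ℝ):ℂ) * ((c' h - c h) / (M:ℂ))‖ ≤ 1 / (2 * M) := by
    intro h hh
    have hxH : ((|h|:ℤ):ℝ) ≤ (H:ℝ) := by
      simp only [mem_Icc] at hh
      have : |h| ≤ (H:ℤ) := abs_le.mpr hh
      exact_mod_cast this
    have hx0 : (0:ℝ) ≤ ((|h|:ℤ):ℝ) := by positivity
    rw [norm_mul, norm_div, Complex.norm_real, Real.norm_eq_abs,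
      abs_of_nonneg (fejer_nonneg H h), Complex.norm_natCast]
    have key2 : fejer H h * ‖c' h - c h‖ ≤ 1 / 2 := by
      unfold fejer
      rw [min_eq_right hxH]
      have hd := herrh h hh
      have hdn : (0:ℝ) ≤ ‖c' h - c h‖ := norm_nonneg _
      rw [div_mul_eq_mul_div, div_le_iff₀ (by positivity : (0:ℝ) < (H:ℝ)^2)]
      nlinarith [sq_nonneg ((H:ℝ) - 2 * ((|h|:ℤ):ℝ)),
        mul_le_mul_of_nonneg_left hd (sub_nonneg.mpr hxH)]
    calc fejer H h * (‖c' h - c h‖ / (M:ℝ)) = fejer H h * ‖c' h - c h‖ / (M:ℝ) := by ring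
      _ ≤ (1/2) / (M:ℝ) := by
          gcongr
      _ = 1 / (2 * M) := by ring
  have herr : ‖∑ h ∈ Finset.Icc (-(H:ℤ)) H, ((fejer H h : ℝ):ℂ) * ((c' h - c h) / (M:ℂ))‖
      ≤ (2*(H:ℝ)+1) / (2*M) := by
    calc ‖∑ h ∈ Finset.Icc (-(H:ℤ)) H, ((fejer H h : ℝ):ℂ) * ((c' h - c h) / (M:ℂ))‖
        ≤ ∑ h ∈ Finset.Icc (-(H:ℤ)) H, ‖((fejer H h : ℝ):ℂ) * ((c' h - c h) / (M:ℂ))‖ :=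
          norm_sum_le _ _
      _ ≤ ∑ h ∈ Finset.Icc (-(H:ℤ)) H, 1 / (2*(M:ℝ)) := Finset.sum_le_sum herrterm
      _ = ((Finset.Icc (-(H:ℤ)) H).card : ℝ) * (1 / (2*(M:ℝ))) := by
          rw [Finset.sum_const, nsmul_eq_mul]
      _ = (2*(H:ℝ)+1) / (2*M) := by
          rw [Int.card_Icc]
          have : ((H:ℤ) + 1 - -(H:ℤ)).toNat = 2*H + 1 := by omega
          rw [this]
          push_cast
          ring
  -- final assembly
  show _ ≤ (∑ h ∈ Finset.Icc (-(H:ℤ)) H, ((fejer H h : ℝ):ℂ) * (c' h / (M:ℂ))).re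
  have hsplit : (∑ h ∈ Finset.Icc (-(H:ℤ)) H, ((fejer H h : ℝ):ℂ) * (c' h / (M:ℂ))).re
      = T / ((H:ℝ)^2 * M)
        + (∑ h ∈ Finset.Icc (-(H:ℤ)) H, ((fejer H h : ℝ):ℂ) * ((c' h - c h) / (M:ℂ))).re := by
    have e4 : ∀ h ∈ Finset.Icc (-(H:ℤ)) H, ((fejer H h : ℝ):ℂ) * (c' h / (M:ℂ))
        = ((fejer H h : ℝ):ℂ) * (c h / (M:ℂ))
          + ((fejer H h : ℝ):ℂ) * ((c' h - c h) / (M:ℂ)) := by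
      intro h _
      ring
    rw [Finset.sum_congr rfl e4, Finset.sum_add_distrib, Complex.add_re, hmain,
      Complex.ofReal_re]
  rw [hsplit]
  have hre : -((2*(H:ℝ)+1)/(2*M))
      ≤ (∑ h ∈ Finset.Icc (-(H:ℤ)) H, ((fejer H h : ℝ):ℂ) * ((c' h - c h) / (M:ℂ))).re := by
    have h1 := Complex.abs_re_le_norm (∑ h ∈ Finset.Icc (-(H:ℤ)) H,
      ((fejer H h : ℝ):ℂ) * ((c' h - c h) / (M:ℂ)))
    have h2 := abs_le.mp (le_trans h1 herr)
    linarith [h2.1]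
  have hmb : ‖S‖^2 / ((M:ℝ) * ((M:ℝ) + H)) ≤ T / ((H:ℝ)^2 * M) := by
    rw [div_le_div_iff₀ (by positivity) (by positivity)]
    nlinarith [hCS, hMposR, sq_nonneg ‖S‖]
  linarith

set_option maxHeartbeats 1000000 in
theorem vdc_variant {α : Type*} (A : Finset α) (σ : α → ℝ) (hσ0 : ∀ a, 0 ≤ σ a)
    (hσ1 : ∑ a ∈ A, σ a = 1) (δ : ℝ) (hδ : δ ∈ Set.Ioo (0 : ℝ) 1)
    (M : ℕ) (hM : 1 ≤ M) (a₀ : ℤ) (f : α → ℤ → ℂ) (hf : ∀ a x, ‖f a x‖ ≤ 1)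
    (hM2 : 10 / δ ^ 2 ≤ (M : ℝ))
    (hlow : δ ≤ ∑ a ∈ A, σ a * ‖(∑ y ∈ Finset.Ioc a₀ (a₀ + M), f a y) / (M : ℂ)‖)
    (H : ℕ) (hH1 : 1 ≤ H) (hH2 : (H : ℝ) ≤ δ ^ 2 / 4 * M) :
    δ ^ 2 / 4 ≤ (∑ a ∈ A, ∑ᶠ h : ℤ, ((σ a * fejer H h : ℝ) : ℂ) *
        ((∑ y ∈ Finset.Ioc a₀ (a₀ + M),
          f a y * (starRingEnd ℂ) (f a (y + h))) / (M : ℂ))).re := by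
  obtain ⟨hδ0, hδ1⟩ := hδ
  have hMposR : (0:ℝ) < M := by exact_mod_cast hM
  have hHposR : (0:ℝ) < H := by exact_mod_cast hH1
  set e : α → ℝ := fun a => ‖(∑ y ∈ Finset.Ioc a₀ (a₀ + M), f a y) / (M : ℂ)‖ with he
  set Q : α → ℝ := fun a => (∑ h ∈ Finset.Icc (-(H:ℤ)) H, ((fejer H h : ℝ) : ℂ) *
      ((∑ y ∈ Finset.Ioc a₀ (a₀ + (M:ℤ)),
        f a y * (starRingEnd ℂ) (f a (y + h))) / (M : ℂ))).re with hQ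
  -- convert finsum to finite sum and pull out σ
  have hfin : ∀ a : α, (∑ᶠ h : ℤ, ((σ a * fejer H h : ℝ) : ℂ) *
      ((∑ y ∈ Finset.Ioc a₀ (a₀ + M),
        f a y * (starRingEnd ℂ) (f a (y + h))) / (M : ℂ))).re = σ a * Q a := by
    intro a
    have hsupp : (∑ᶠ h : ℤ, ((σ a * fejer H h : ℝ) : ℂ) *
        ((∑ y ∈ Finset.Ioc a₀ (a₀ + M),
          f a y * (starRingEnd ℂ) (f a (y + h))) / (M : ℂ)))
        = ∑ h ∈ Finset.Icc (-(H:ℤ)) H, ((σ a * fejer H h : ℝ) : ℂ) *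
          ((∑ y ∈ Finset.Ioc a₀ (a₀ + M),
            f a y * (starRingEnd ℂ) (f a (y + h))) / (M : ℂ)) := by
      apply finsum_eq_finset_sum_of_support_subset
      intro h hh
      simp only [Function.mem_support] at hh
      by_contra hmem
      apply hh
      have h0 : fejer H h = 0 := by
        apply fejer_eq_zero
        simp only [Finset.coe_Icc, Set.mem_Icc, not_and_or, not_le] at hmem
        have ha1 := le_abs_self h
        have ha2 := neg_le_abs h
        rcases hmem with h1 | h1 <;> omega
      rw [h0]
      simp
    rw [hsupp, hQ]
    have e1 : ∀ h ∈ Finset.Icc (-(H:ℤ)) H, ((σ a * fejer H h : ℝ) : ℂ) *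
        ((∑ y ∈ Finset.Ioc a₀ (a₀ + M),
          f a y * (starRingEnd ℂ) (f a (y + h))) / (M : ℂ))
        = ((σ a : ℝ) : ℂ) * (((fejer H h : ℝ) : ℂ) *
          ((∑ y ∈ Finset.Ioc a₀ (a₀ + M),
            f a y * (starRingEnd ℂ) (f a (y + h))) / (M : ℂ))) := by
      intro h _
      push_cast
      ring
    rw [Finset.sum_congr rfl e1, ← Finset.mul_sum, Complex.re_ofReal_mul]
  -- per-a lower bound
  have hδsq : δ^2 ≤ 1 := by nlinarith
  have hHM : (H:ℝ)/M ≤ δ^2/4 := by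
    rw [div_le_iff₀ hMposR]
    linarith [hH2]
  have hinvM : 1/(M:ℝ) ≤ δ^2/10 := by
    rw [div_le_div_iff₀ hMposR (by norm_num : (0:ℝ) < 10)]
    have hδ2pos : (0:ℝ) < δ^2 := by positivity
    rw [div_le_iff₀ hδ2pos] at hM2
    linarith
  have h4H : 4*(H:ℝ) ≤ (M:ℝ) := by nlinarith
  have hQa : ∀ a, (4/5) * (e a)^2 - (3/8)*δ^2 ≤ Q a := by
    intro a
    have hk : ‖∑ y ∈ Finset.Ioc a₀ (a₀ + (M:ℤ)), f a y‖ ^ 2 / ((M:ℝ) * ((M:ℝ) + H))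
        - (2*(H:ℝ)+1)/(2*M) ≤ Q a := key H M hH1 hM a₀ (f a) (hf a)
    have hea : ‖∑ y ∈ Finset.Ioc a₀ (a₀ + (M:ℤ)), f a y‖ = e a * M := by
      rw [he]
      simp only [norm_div, Complex.norm_natCast]
      field_simp
    rw [hea] at hk
    have hstep1 : (e a * M)^2 / ((M:ℝ) * ((M:ℝ) + H)) = (e a)^2 * ((M:ℝ)/((M:ℝ)+H)) := by
      field_simp
    have hstep2 : (4:ℝ)/5 ≤ (M:ℝ)/((M:ℝ)+H) := by
      rw [div_le_div_iff₀ (by norm_num) (by positivity)]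
      linarith
    have hstep3 : (4/5) * (e a)^2 ≤ (e a)^2 * ((M:ℝ)/((M:ℝ)+H)) := by
      nlinarith [sq_nonneg (e a)]
    have hstep4 : (2*(H:ℝ)+1)/(2*M) ≤ (3/8)*δ^2 := by
      have : (2*(H:ℝ)+1)/(2*M) = (H:ℝ)/M + (1/2)*(1/M) := by
        field_simp
      rw [this]
      nlinarith
    nlinarith [hk, hstep1, hstep3, hstep4]
  -- Cauchy-Schwarz in a
  have hCSa : δ^2 ≤ ∑ a ∈ A, σ a * (e a)^2 := by
    have hse : δ ≤ ∑ a ∈ A, σ a * e a := hlow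
    have h2 := Finset.sum_mul_sq_le_sq_mul_sq A (fun a => Real.sqrt (σ a))
      (fun a => Real.sqrt (σ a) * e a)
    have h3 : ∀ a ∈ A, Real.sqrt (σ a) * (Real.sqrt (σ a) * e a) = σ a * e a := by
      intro a _
      rw [← mul_assoc, Real.mul_self_sqrt (hσ0 a)]
    have h4 : ∀ a ∈ A, Real.sqrt (σ a) ^ 2 = σ a := fun a _ => Real.sq_sqrt (hσ0 a)
    have h5 : ∀ a ∈ A, (Real.sqrt (σ a) * e a)^2 = σ a * (e a)^2 := by
      intro a _
      rw [mul_pow, Real.sq_sqrt (hσ0 a)]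
    rw [Finset.sum_congr rfl h3, Finset.sum_congr rfl h4, Finset.sum_congr rfl h5, hσ1,
      one_mul] at h2
    have h6 : δ^2 ≤ (∑ a ∈ A, σ a * e a)^2 := by
      apply pow_le_pow_left₀ (le_of_lt hδ0) hse
    linarith
  -- combine
  rw [Complex.re_sum, Finset.sum_congr rfl (fun a _ => hfin a)]
  have h7 : ∑ a ∈ A, σ a * ((4/5) * (e a)^2 - (3/8)*δ^2) ≤ ∑ a ∈ A, σ a * Q a :=
    Finset.sum_le_sum fun a _ => mul_le_mul_of_nonneg_left (hQa a) (hσ0 a)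
  have h8 : ∑ a ∈ A, σ a * ((4/5) * (e a)^2 - (3/8)*δ^2)
      = (4/5) * (∑ a ∈ A, σ a * (e a)^2) - (3/8)*δ^2 := by
    have e5 : ∀ a ∈ A, σ a * ((4/5) * (e a)^2 - (3/8)*δ^2)
        = (4/5)*(σ a * (e a)^2) - (3/8)*δ^2*σ a := fun a _ => by ring
    rw [Finset.sum_congr rfl e5, Finset.sum_sub_distrib, ← Finset.mul_sum, ← Finset.mul_sum,
      hσ1, mul_one]
  rw [h8] at h7
  nlinarith [h7, hCSa]
end

section
/- Let $\delta \in (0, 1/10)$, $q, L, N_1, N_2 \geq 1$ with $L \geq \delta N_1$, let $\mathcal{A}$ be a nonempty finite set, and for each $\alpha \in \mathcal{A}$ let $f_\alpha : \mathbb{Z}^2 \to \mathbb{C}$ be $1$-bounded and supported in $[N_1] \times [N_2]$; set $F := \mathbf{E}_{\alpha \in \mathcal{A}} f_\alpha$. There is an absolute constant $C > 0$ such that if $N_1, N_2 \geq \delta^{-C}$ and $\mathbf{E}_{y \in [N_2]} \|\mathbf{E}(F_y \mid \mathcal{B}_{(qL,q)})\|_2^2 \geq \delta N_1$ (the $s =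 0$ case), then $\mathbf{E}_{y \in [N_2]} \mathbf{E}_{|h| \leq N_2} \left| \mathbf{E}_{x \in [N_1], \alpha \in \mathcal{A}} f_\alpha(x, y) \overline{f_\alpha(x, y + h)} \right| \geq \delta^C$. -/
open scoped BigOperators

namespace DDI
variable (q L : ℕ)

def idx (x : ℤ) : ℤ × ℤ := (x % (q:ℤ), (x - 1) / ((q:ℤ) * L))

def astart (p : ℤ × ℤ) : ℤ := (q:ℤ) * L * p.2 + 1 + (p.1 - 1) % q

noncomputable def AtomF (p : ℤ × ℤ) : Finset ℤ :=
  (Finset.range L).image (fun k : ℕ => astart q L p + q * (k:ℤ))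

variable {q L}

lemma astart_emod (hq : 0 < q) (x : ℤ) (k : ℤ) :
    (astart q L (idx q L x) + q * k) % q = x % q := by
  have hqz : (q:ℤ) ≠ 0 := by exact_mod_cast hq.ne'
  unfold astart idx
  simp only
  have : (q:ℤ) * L * ((x-1)/((q:ℤ)*L)) + 1 + (x % q - 1) % q + q * k
      = (1 + (x % q - 1) % q) + (q:ℤ) * (L * ((x-1)/((q:ℤ)*L)) + k) := by ring
  rw [this, Int.add_mul_emod_self_left, Int.add_emod, Int.emod_emod_of_dvd _ dvd_rfl,
    ← Int.add_emod]
  simp [Int.emod_emod_of_dvd]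

lemma mem_AtomF_iff (hq : 0 < q) (hL : 0 < L) (x y : ℤ) :
    y ∈ AtomF q L (idx q L x) ↔ idx q L y = idx q L x := by
  have hqZ : (0:ℤ) < q := by exact_mod_cast hq
  have hLZ : (0:ℤ) < L := by exact_mod_cast hL
  have hM : (0:ℤ) < (q:ℤ) * L := mul_pos hqZ hLZ
  set M : ℤ := (q:ℤ) * L with hMdef
  set r : ℤ := x % q with hr
  set s : ℤ := (x - 1) / M with hs
  have u0 : 0 ≤ (r - 1) % q := Int.emod_nonneg _ hqZ.ne'
  have u1 : (r - 1) % q < q := Int.emod_lt_of_pos _ hqZ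
  have hb : astart q L (idx q L x) = M * s + 1 + (r-1) % q := rfl
  constructor
  · intro hy
    rcases Finset.mem_image.1 hy with ⟨k, hk, rfl⟩
    have hkL : (k:ℤ) ≤ L - 1 := by
      have := Finset.mem_range.1 hk; omega
    have h1 : (astart q L (idx q L x) + q * k) % q = r := astart_emod hq x k
    have h2 : (astart q L (idx q L x) + q * k - 1) / M = s := by
      have : astart q L (idx q L x) + q * k - 1 = ((r-1) % q + q * k) + M * s := by
        rw [hb]; ring
      rw [this, Int.add_mul_ediv_left _ s hM.ne',
        Int.ediv_eq_zero_of_lt (add_nonneg u0 (by positivity)) (by nlinarith), zero_add]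
    exact Prod.ext h1 h2
  · intro hy
    obtain ⟨hy1, hy2⟩ : y % q = r ∧ (y-1)/M = s := by
      have e1 : (idx q L y).1 = (idx q L x).1 := by rw [hy]
      have e2 : (idx q L y).2 = (idx q L x).2 := by rw [hy]
      exact ⟨e1, e2⟩
    have hbmod : astart q L (idx q L x) % q = r := by
      have := @astart_emod q L hq x 0
      simpa using this
    have hdvd : (q:ℤ) ∣ y - astart q L (idx q L x) := by
      rw [Int.dvd_iff_emod_eq_zero, ← Int.emod_eq_emod_iff_emod_sub_eq_zero, hy1, hbmod]
    obtain ⟨k, hkeq⟩ := hdvd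
    have hyl : M * s ≤ y - 1 := by
      have h := Int.ediv_mul_le (y-1) hM.ne'
      rw [hy2] at h; linarith [h]
    have hyu : y - 1 < M * s + M := by
      have h := Int.lt_ediv_add_one_mul_self (y-1) hM
      rw [hy2] at h; linarith [h]
    have hk0 : 0 ≤ k := by nlinarith [hb]
    have hkL : k < L := by nlinarith [hb]
    refine Finset.mem_image.2 ⟨k.toNat, Finset.mem_range.2 ?_, ?_⟩
    · omega
    · have : ((k.toNat : ℤ)) = k := Int.toNat_of_nonneg hk0
      rw [this]; omega

lemma card_AtomF (hq : 0 < q) (p : ℤ × ℤ) : (AtomF q L p).card = L := by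
  rw [AtomF, Finset.card_image_of_injective, Finset.card_range]
  intro a b hab
  simp only [add_right_inj] at hab
  have hqZ : (0:ℤ) < q := by exact_mod_cast hq
  have : (a:ℤ) = b := mul_left_cancel₀ hqZ.ne' hab
  exact_mod_cast this

lemma Bpart_eq (hq : 0 < q) (hL : 0 < L) (x : ℤ) :
    Bpart q L x = ↑(AtomF q L (idx q L x)) := by
  ext y
  rw [Finset.mem_coe, mem_AtomF_iff hq hL]
  simp [Bpart, idx, Prod.ext_iff]

lemma condExp_eq (hq : 0 < q) (hL : 0 < L) (g : ℤ → ℂ) (x : ℤ) :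
    condExp (Bpart q L) g x = (∑ t ∈ AtomF q L (idx q L x), g t) / (L : ℂ) := by
  rw [condExp, Bpart_eq hq hL, finsum_mem_coe_finset, Nat.card_coe_set_eq,
    Set.ncard_coe_finset, card_AtomF hq]

lemma self_mem_AtomF (hq : 0 < q) (hL : 0 < L) (x : ℤ) :
    x ∈ AtomF q L (idx q L x) := (mem_AtomF_iff hq hL x x).2 rfl

lemma idx_eq_of_mem_AtomF (hq : 0 < q) (hL : 0 < L) {X : Finset ℤ} {p : ℤ × ℤ}
    (hp : p ∈ X.image (idx q L)) {x : ℤ} (hx : x ∈ AtomF q L p) : idx q L x = p := by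
  rcases Finset.mem_image.1 hp with ⟨x₀, _, rfl⟩
  exact (mem_AtomF_iff hq hL x₀ x).1 hx

lemma pairwise_disj (hq : 0 < q) (hL : 0 < L) (X : Finset ℤ) :
    (↑(X.image (idx q L)) : Set (ℤ × ℤ)).PairwiseDisjoint (AtomF q L) := by
  intro p hp p' hp' hne
  refine Finset.disjoint_left.2 fun x hx hx' => hne ?_
  rw [← idx_eq_of_mem_AtomF hq hL hp hx, ← idx_eq_of_mem_AtomF hq hL hp' hx']

lemma finsum_condExp_sq (hq : 0 < q) (hL : 0 < L) (X : Finset ℤ) (g : ℤ → ℂ)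
    (hsupp : ∀ x, g x ≠ 0 → x ∈ X) :
    ∑ᶠ x : ℤ, ‖condExp (Bpart q L) g x‖ ^ 2
      = ∑ p ∈ X.image (idx q L), (L:ℝ) * ‖(∑ t ∈ AtomF q L p, g t) / (L : ℂ)‖ ^ 2 := by
  classical
  set P := X.image (idx q L) with hP
  set U := P.biUnion (AtomF q L) with hU
  have hsub : (Function.support fun x => ‖condExp (Bpart q L) g x‖ ^ 2) ⊆ ↑U := by
    intro x hx
    simp only [Function.mem_support] at hx
    have hc : condExp (Bpart q L) g x ≠ 0 := by
      intro h; rw [h] at hx; simp at hx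
    rw [condExp_eq hq hL] at hc
    have hsum : (∑ t ∈ AtomF q L (idx q L x), g t) ≠ 0 := by
      intro h; rw [h] at hc; simp at hc
    obtain ⟨t, ht, hgt⟩ := Finset.exists_ne_zero_of_sum_ne_zero hsum
    have hidx : idx q L t = idx q L x := (mem_AtomF_iff hq hL x t).1 ht
    have hpP : idx q L x ∈ P := by
      rw [hP, ← hidx]
      exact Finset.mem_image_of_mem _ (hsupp t hgt)
    exact Finset.mem_coe.2 (Finset.mem_biUnion.2 ⟨_, hpP, self_mem_AtomF hq hL x⟩)
  rw [finsum_eq_sum_of_support_subset _ hsub, Finset.sum_biUnion (pairwise_disj hq hL X)]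
  refine Finset.sum_congr rfl fun p hp => ?_
  have : ∀ x ∈ AtomF q L p, ‖condExp (Bpart q L) g x‖ ^ 2
      = ‖(∑ t ∈ AtomF q L p, g t) / (L : ℂ)‖ ^ 2 := by
    intro x hx
    rw [condExp_eq hq hL, idx_eq_of_mem_AtomF hq hL hp hx]
  rw [Finset.sum_congr rfl this, Finset.sum_const, card_AtomF hq, nsmul_eq_mul]

lemma sum_card_inter (hq : 0 < q) (hL : 0 < L) (X : Finset ℤ) :
    ∑ p ∈ X.image (idx q L), (AtomF q L p ∩ X).card = X.card := by
  classical
  set P := X.image (idx q L) with hP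
  have hXeq : X = P.biUnion (fun p => AtomF q L p ∩ X) := by
    ext x
    constructor
    · intro hx
      exact Finset.mem_biUnion.2 ⟨idx q L x, Finset.mem_image_of_mem _ hx,
        Finset.mem_inter.2 ⟨self_mem_AtomF hq hL x, hx⟩⟩
    · intro hx
      rcases Finset.mem_biUnion.1 hx with ⟨p, _, hmem⟩
      exact (Finset.mem_inter.1 hmem).2
  conv_rhs => rw [hXeq]
  rw [Finset.card_biUnion]
  intro p hp p' hp' hne
  exact Finset.disjoint_left.2 fun x hx hx' => hne (by
    rw [← idx_eq_of_mem_AtomF hq hL hp (Finset.mem_inter.1 hx).1,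
        ← idx_eq_of_mem_AtomF hq hL hp' (Finset.mem_inter.1 hx').1])

lemma card_inter_le_L (hq : 0 < q) (p : ℤ × ℤ) (X : Finset ℤ) :
    (AtomF q L p ∩ X).card ≤ L := by
  calc (AtomF q L p ∩ X).card ≤ (AtomF q L p).card :=
        Finset.card_le_card (Finset.inter_subset_left)
    _ = L := card_AtomF hq p

lemma q_mul_card_inter_le (hq : 0 < q) (p : ℤ × ℤ) (N₁ : ℕ) (hN : 1 ≤ N₁) :
    (q:ℤ) * ((AtomF q L p ∩ Finset.Icc (1:ℤ) (N₁:ℤ)).card) ≤ (N₁:ℤ) + q - 1 := by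
  classical
  have hqZ : (0:ℤ) < q := by exact_mod_cast hq
  set X := Finset.Icc (1:ℤ) (N₁:ℤ)
  set S := (Finset.range L).filter (fun k : ℕ => astart q L p + q * (k:ℤ) ∈ X) with hS
  have himg : AtomF q L p ∩ X = S.image (fun k : ℕ => astart q L p + q * (k:ℤ)) := by
    ext y
    simp only [Finset.mem_inter, AtomF, Finset.mem_image, Finset.mem_filter, hS]
    constructor
    · rintro ⟨⟨k, hk, rfl⟩, hy⟩; exact ⟨k, ⟨hk, hy⟩, rfl⟩
    · rintro ⟨k, ⟨hk, hy⟩, rfl⟩; exact ⟨⟨k, hk, rfl⟩, hy⟩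
  have hinj : Function.Injective (fun k : ℕ => astart q L p + q * (k:ℤ)) := by
    intro a b hab
    simp only [add_right_inj] at hab
    exact_mod_cast mul_left_cancel₀ hqZ.ne' hab
  rw [himg, Finset.card_image_of_injective _ hinj]
  rcases Finset.eq_empty_or_nonempty S with hSe | hSne
  · rw [hSe]; simp; omega
  · set k₁ := S.min' hSne
    set k₂ := S.max' hSne
    have hsub : S ⊆ Finset.Icc k₁ k₂ := fun k hk =>
      Finset.mem_Icc.2 ⟨S.min'_le k hk, S.le_max' k hk⟩
    have hcard : S.card ≤ k₂ + 1 - k₁ := by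
      calc S.card ≤ (Finset.Icc k₁ k₂).card := Finset.card_le_card hsub
        _ = k₂ + 1 - k₁ := Nat.card_Icc k₁ k₂
    have h₁ : 1 ≤ astart q L p + q * (k₁:ℤ) := by
      have := (Finset.mem_filter.1 (S.min'_mem hSne)).2
      exact (Finset.mem_Icc.1 this).1
    have h₂ : astart q L p + q * (k₂:ℤ) ≤ N₁ := by
      have := (Finset.mem_filter.1 (S.max'_mem hSne)).2
      exact (Finset.mem_Icc.1 this).2
    have hk12 : k₁ ≤ k₂ := S.min'_le _ (S.max'_mem hSne)
    have hd : (q:ℤ) * ((k₂:ℤ) - k₁) ≤ (N₁:ℤ) - 1 := by linarith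
    have : (S.card : ℤ) ≤ (k₂:ℤ) - k₁ + 1 := by
      have := hcard; omega
    nlinarith

lemma P_card_le (hq : 0 < q) (hL : 0 < L) (N₁ : ℕ) :
    ((Finset.Icc (1:ℤ) (N₁:ℤ)).image (idx q L)).card
      ≤ q * ((((N₁:ℤ) - 1) / ((q:ℤ) * L) + 1).toNat) := by
  classical
  have hqZ : (0:ℤ) < q := by exact_mod_cast hq
  have hLZ : (0:ℤ) < L := by exact_mod_cast hL
  have hM : (0:ℤ) < (q:ℤ) * L := mul_pos hqZ hLZ
  set s₁ := ((N₁:ℤ) - 1) / ((q:ℤ) * L) with hs₁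
  have hsub : (Finset.Icc (1:ℤ) (N₁:ℤ)).image (idx q L)
      ⊆ (Finset.Ico (0:ℤ) (q:ℤ)) ×ˢ (Finset.Icc (0:ℤ) s₁) := by
    intro p hp
    rcases Finset.mem_image.1 hp with ⟨x, hx, rfl⟩
    rcases Finset.mem_Icc.1 hx with ⟨hx1, hx2⟩
    refine Finset.mem_product.2 ⟨Finset.mem_Ico.2 ⟨Int.emod_nonneg x hqZ.ne',
      Int.emod_lt_of_pos x hqZ⟩, Finset.mem_Icc.2 ⟨Int.ediv_nonneg (by omega) hM.le, ?_⟩⟩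
    exact Int.ediv_le_ediv hM (by omega)
  calc ((Finset.Icc (1:ℤ) (N₁:ℤ)).image (idx q L)).card
      ≤ _ := Finset.card_le_card hsub
    _ = (Finset.Ico (0:ℤ) (q:ℤ)).card * (Finset.Icc (0:ℤ) s₁).card := Finset.card_product _ _
    _ = q * ((s₁ + 1).toNat) := by rw [Int.card_Ico, Int.card_Icc]; simp

lemma numeric_core {δ L K mst Sg W SG N₁ N₂ q : ℝ}
    (hδ0 : 0 < δ) (hδ10 : δ < 1/10) (hLR : 1 ≤ L) (hN₁R : 1 ≤ N₁) (hN₂R : 1 ≤ N₂)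
    (hqR : 1 ≤ q) (hK1R : 1 ≤ K) (hSg0 : 0 ≤ Sg) (hSG0 : 0 ≤ SG) (hW0 : 0 ≤ W)
    (hmst0 : 0 ≤ mst) (hmst1 : 1 ≤ mst) (hmL : mst ≤ L) (hqm2 : q * mst ≤ 2*N₁)
    (hKb : δ^2*K ≤ 3) (hSgK : δ*N₁*N₂ ≤ K*(L*Sg)) (hSgpos : 0 < Sg)
    (hWm : Sg*L ≤ mst*W) (hLW2 : (L*W)^2 ≤ mst*SG) :
    δ^6*N₁*N₂^2 ≤ 18*SG := by
  have hLpos : (0:ℝ) < L := by linarith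
  have f1 : L^4 * Sg^2 ≤ SG * mst^3 := by
    have e2 : (Sg * L)^2 ≤ (mst * W)^2 :=
      pow_le_pow_left₀ (mul_nonneg hSg0 hLpos.le) hWm 2
    have c2 : mst^2 * (L * W)^2 ≤ mst^2 * (mst * SG) :=
      mul_le_mul_of_nonneg_left hLW2 (by positivity)
    have c3 : L^2 * (Sg * L)^2 ≤ L^2 * (mst * W)^2 :=
      mul_le_mul_of_nonneg_left e2 (by positivity)
    ring_nf at c2 c3 ⊢
    nlinarith [c2, c3]
  have f2 : (δ * N₁ * N₂)^2 ≤ (K * (L * Sg))^2 :=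
    pow_le_pow_left₀ (by positivity) hSgK 2
  have f3 : L^2 * (δ * N₁ * N₂)^2 ≤ K^2 * (SG * mst^3) := by
    have c4 : K^2 * (L^4 * Sg^2) ≤ K^2 * (SG * mst^3) :=
      mul_le_mul_of_nonneg_left f1 (by positivity)
    have c5 : L^2 * (δ * N₁ * N₂)^2 ≤ L^2 * (K * (L * Sg))^2 :=
      mul_le_mul_of_nonneg_left f2 (by positivity)
    ring_nf at c4 c5 ⊢
    linarith [c4, c5]
  have f4 : mst^3 ≤ 2 * N₁ * L^2 := by
    have a1 : mst^2 ≤ L^2 := pow_le_pow_left₀ hmst0 hmL 2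
    have a2 : mst ≤ 2*N₁ := by
      have := le_mul_of_one_le_left hmst0 hqR
      linarith
    have a3 : mst * mst^2 ≤ (2*N₁) * L^2 :=
      mul_le_mul a2 a1 (by positivity) (by linarith)
    ring_nf at a3 ⊢
    linarith
  have f5 : L^2 * (δ * N₁ * N₂)^2 ≤ K^2 * (SG * (2 * N₁ * L^2)) := by
    have c6 : SG * mst^3 ≤ SG * (2 * N₁ * L^2) := mul_le_mul_of_nonneg_left f4 hSG0
    have c7 : K^2 * (SG * mst^3) ≤ K^2 * (SG * (2 * N₁ * L^2)) :=
      mul_le_mul_of_nonneg_left c6 (by positivity)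
    linarith [f3]
  have f6 : δ^2 * N₁ * N₂^2 ≤ 2 * K^2 * SG := by
    have hL2pos : (0:ℝ) < L^2 := by positivity
    have h7 : δ^2 * N₁^2 * N₂^2 ≤ 2 * N₁ * K^2 * SG := by
      refine le_of_mul_le_mul_left ?_ hL2pos
      calc L^2 * (δ^2 * N₁^2 * N₂^2) = L^2 * (δ * N₁ * N₂)^2 := by ring
        _ ≤ K^2 * (SG * (2 * N₁ * L^2)) := f5
        _ = L^2 * (2 * N₁ * K^2 * SG) := by ring
    have hN₁pos : (0:ℝ) < N₁ := by linarith
    refine le_of_mul_le_mul_left ?_ hN₁pos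
    calc N₁ * (δ^2 * N₁ * N₂^2) = δ^2 * N₁^2 * N₂^2 := by ring
      _ ≤ 2 * N₁ * K^2 * SG := h7
      _ = N₁ * (2 * K^2 * SG) := by ring
  have f7 : δ^4 * K^2 ≤ 9 := by
    have := mul_le_mul hKb hKb (by positivity) (by norm_num)
    ring_nf at this ⊢
    linarith
  have c8 : δ^4 * (δ^2 * N₁ * N₂^2) ≤ δ^4 * (2 * K^2 * SG) :=
    mul_le_mul_of_nonneg_left f6 (by positivity)
  have c9 : δ^4 * K^2 * SG ≤ 9 * SG := mul_le_mul_of_nonneg_right f7 hSG0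
  ring_nf at c8 c9 ⊢
  linarith [c8, c9]

lemma numeric_final {δ N₁ N₂ Ac SG S : ℝ} (hδ0 : 0 < δ) (hδ10 : δ < 1/10)
    (hN₁R : 1 ≤ N₁) (hN₂R : 1 ≤ N₂) (hAc : 0 < Ac) (hSG0 : 0 ≤ SG)
    (hSGb : δ^6*N₁*N₂^2 ≤ 18*SG) (hbig : Ac * SG ≤ S) :
    δ^8 * (N₂*(2*N₂+1)) * (N₁*Ac) ≤ S := by
  have h100 : δ^2 ≤ 1/100 := by nlinarith
  have hQ : 18 * (δ^2 * (N₂ * (2 * N₂ + 1))) ≤ N₂^2 := by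
    have w0 := mul_le_mul_of_nonneg_right h100 (by positivity : (0:ℝ) ≤ N₂ * (2 * N₂ + 1))
    have w00 : (1:ℝ) * N₂ ≤ N₂ * N₂ := mul_le_mul_of_nonneg_right hN₂R (by linarith)
    ring_nf at w0 w00 ⊢
    linarith
  have w1 : δ^6 * (18 * (δ^2 * (N₂ * (2 * N₂ + 1)))) ≤ δ^6 * N₂^2 :=
    mul_le_mul_of_nonneg_left hQ (by positivity)
  have w2 : (N₁*Ac) * (δ^6 * (18 * (δ^2 * (N₂ * (2 * N₂ + 1)))))
      ≤ (N₁*Ac) * (δ^6 * N₂^2) := mul_le_mul_of_nonneg_left w1 (by positivity)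
  have w3 : Ac * (δ^6 * N₁ * N₂^2) ≤ Ac * (18 * SG) :=
    mul_le_mul_of_nonneg_left hSGb hAc.le
  ring_nf at w2 w3 ⊢
  linarith [w2, w3, hbig]

lemma numeric_sgpos {δ L K Sg N₁ N₂ : ℝ} (hδ0 : 0 < δ) (hN₁R : 1 ≤ N₁) (hN₂R : 1 ≤ N₂)
    (hLR : 1 ≤ L) (hK1R : 1 ≤ K) (hSgK : δ*N₁*N₂ ≤ K*(L*Sg)) : 0 < Sg := by
  rcases lt_or_ge 0 Sg with h | h
  · exact h
  · exfalso
    have t1 : L*Sg ≤ L*0 := mul_le_mul_of_nonneg_left h (by linarith)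
    have t2 : K*(L*Sg) ≤ K*(L*0) := mul_le_mul_of_nonneg_left t1 (by linarith)
    have hpos : 0 < δ*N₁*N₂ := by positivity
    ring_nf at t2
    linarith [hSgK]

lemma numeric_Wpos {mst W Sg L : ℝ} (hmst0 : 0 ≤ mst) (hSgpos : 0 < Sg) (hLR : 1 ≤ L)
    (hWm : Sg*L ≤ mst*W) : 0 < W := by
  rcases lt_or_ge 0 W with h | h
  · exact h
  · exfalso
    have t1 : mst * W ≤ mst * 0 := mul_le_mul_of_nonneg_left h hmst0
    have t3 : 0 < Sg * L := mul_pos hSgpos (lt_of_lt_of_le zero_lt_one hLR)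
    ring_nf at t1
    linarith [hWm, t1, t3]

lemma numeric_cs {Ac g S : ℝ} (hAc : 0 < Ac) (h : (Ac*g)^2 ≤ Ac*S) : Ac*g^2 ≤ S := by
  refine le_of_mul_le_mul_left ?_ hAc
  calc Ac*(Ac*g^2) = (Ac*g)^2 := by ring
    _ ≤ Ac*S := h

end DDI
set_option maxHeartbeats 16000000 in
open DDI in
theorem dual_difference_interchange_base :
    ∃ C : ℝ, 0 < C ∧
      ∀ {α : Type} (A : Finset α), A.Nonempty →
      ∀ (q L N₁ N₂ : ℕ), 1 ≤ q → 1 ≤ L → 1 ≤ N₁ → 1 ≤ N₂ →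
      ∀ δ : ℝ, δ ∈ Set.Ioo (0 : ℝ) (1 / 10) →
        δ * N₁ ≤ (L : ℝ) → δ ^ (-C) ≤ (N₁ : ℝ) → δ ^ (-C) ≤ (N₂ : ℝ) →
        ∀ f : α → ℤ × ℤ → ℂ, (∀ a p, ‖f a p‖ ≤ 1) →
          (∀ a p, f a p ≠ 0 → p.1 ∈ Finset.Icc (1 : ℤ) (N₁ : ℤ) ∧
            p.2 ∈ Finset.Icc (1 : ℤ) (N₂ : ℤ)) →
          δ * N₁ ≤ (∑ y ∈ Finset.Icc (1 : ℤ) (N₂ : ℤ),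
              ∑ᶠ x : ℤ, ‖condExp (Bpart q L)
                (fun t => (∑ a ∈ A, f a (t, y)) / (A.card : ℂ)) x‖ ^ 2) / (N₂ : ℝ) →
          δ ^ C ≤ (∑ y ∈ Finset.Icc (1 : ℤ) (N₂ : ℤ),
              ∑ h ∈ Finset.Icc (-(N₂ : ℤ)) (N₂ : ℤ),
                ‖(∑ x ∈ Finset.Icc (1 : ℤ) (N₁ : ℤ), ∑ a ∈ A,
                    f a (x, y) * (starRingEnd ℂ) (f a (x, y + h)))
                  / ((N₁ : ℂ) * (A.card : ℂ))‖)
            / ((N₂ : ℝ) * (2 * (N₂ : ℝ) + 1)) := by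
  classical
  refine ⟨8, by norm_num, ?_⟩
  intro α A hA q L N₁ N₂ hq hL hN₁ hN₂ δ hδ hLN₁ hN1big hN2big f hf1 hfsupp Hyp
  obtain ⟨hδ0, hδ10⟩ := hδ
  have hq0 : 0 < q := hq
  have hL0 : 0 < L := hL
  -- real casts
  have hqR : (1:ℝ) ≤ q := by exact_mod_cast hq
  have hLR : (1:ℝ) ≤ L := by exact_mod_cast hL
  have hN₁R : (1:ℝ) ≤ N₁ := by exact_mod_cast hN₁
  have hN₂R : (1:ℝ) ≤ N₂ := by exact_mod_cast hN₂
  have hAcard : (0:ℝ) < A.card := by exact_mod_cast Finset.card_pos.2 hA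
  -- N₁ ≥ δ⁻⁸
  have hN1' : 1 / δ ^ 8 ≤ (N₁:ℝ) := by
    have : δ ^ (-(8:ℝ)) = 1 / δ ^ 8 := by
      rw [Real.rpow_neg hδ0.le, one_div]
      norm_num
    rwa [this] at hN1big
  have hδ8pos : (0:ℝ) < δ ^ 8 := by positivity
  -- δ² N₁ ≥ 2
  have hδ6 : (2:ℝ) ≤ δ ^ 2 * N₁ := by
    have h1 : δ ^ 2 * (1 / δ ^ 8) ≤ δ ^ 2 * N₁ := by
      apply mul_le_mul_of_nonneg_left hN1' (by positivity)
    have h2 : δ ^ 2 * (1 / δ ^ 8) = 1 / δ ^ 6 := by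
      field_simp
    have h3 : (2:ℝ) ≤ 1 / δ ^ 6 := by
      rw [le_div_iff₀ (by positivity)]
      nlinarith [pow_le_pow_left₀ hδ0.le hδ10.le 6, sq_nonneg δ]
    linarith [h2 ▸ h1]
  -- notation
  set X : Finset ℤ := Finset.Icc (1:ℤ) (N₁:ℤ) with hX
  set Y : Finset ℤ := Finset.Icc (1:ℤ) (N₂:ℤ) with hY
  set F : ℤ → ℤ → ℂ := fun x y => (∑ a ∈ A, f a (x,y)) / (A.card : ℂ) with hF
  set P : Finset (ℤ × ℤ) := X.image (idx q L) with hP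
  set φp : (ℤ × ℤ) → ℤ → ℂ := fun p y => (∑ t ∈ AtomF q L p, F t y) / (L:ℂ) with hφp
  set m : (ℤ × ℤ) → ℕ := fun p => (AtomF q L p ∩ X).card with hm
  have hYcard : Y.card = N₂ := by rw [hY, Int.card_Icc]; simp
  have hXcard : X.card = N₁ := by rw [hX, Int.card_Icc]; simp
  have hYne : Y.Nonempty := by
    refine ⟨1, Finset.mem_Icc.2 ⟨le_refl _, by exact_mod_cast hN₂⟩⟩
  have hPne : P.Nonempty := by
    refine ⟨idx q L 1, Finset.mem_image_of_mem _ (Finset.mem_Icc.2 ⟨le_refl _, by exact_mod_cast hN₁⟩)⟩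
  have hK1 : 1 ≤ P.card := Finset.card_pos.2 hPne
  have hK1R : (1:ℝ) ≤ P.card := by exact_mod_cast hK1
  -- support and boundedness of F
  have hFsupp : ∀ x y, x ∉ X → F x y = 0 := by
    intro x y hx
    have : ∀ a ∈ A, f a (x,y) = 0 := by
      intro a _
      by_contra hne
      exact hx (hfsupp a (x,y) hne).1
    simp [hF, Finset.sum_congr rfl this]
  have hF1 : ∀ x y, ‖F x y‖ ≤ 1 := by
    intro x y
    rw [hF]
    simp only [norm_div, Complex.norm_natCast]
    rw [div_le_one hAcard]
    calc ‖∑ a ∈ A, f a (x,y)‖ ≤ ∑ a ∈ A, ‖f a (x,y)‖ := norm_sum_le _ _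
      _ ≤ ∑ a ∈ A, 1 := Finset.sum_le_sum (fun a _ => hf1 a _)
      _ = A.card := by simp
  -- norm of atom sums
  have hφnorm : ∀ p y, ‖∑ t ∈ AtomF q L p, F t y‖ ≤ m p := by
    intro p y
    have : ∑ t ∈ AtomF q L p, F t y = ∑ t ∈ AtomF q L p ∩ X, F t y := by
      refine (Finset.sum_subset Finset.inter_subset_left ?_).symm
      intro t ht htn
      exact hFsupp t y (fun hX' => htn (Finset.mem_inter.2 ⟨ht, hX'⟩))
    rw [this]
    calc ‖∑ t ∈ AtomF q L p ∩ X, F t y‖ ≤ ∑ t ∈ AtomF q L p ∩ X, ‖F t y‖ := norm_sum_le _ _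
      _ ≤ ∑ t ∈ AtomF q L p ∩ X, 1 := Finset.sum_le_sum (fun t _ => hF1 t y)
      _ = m p := by simp [hm]
  have hφm : ∀ p y, ‖φp p y‖ * L ≤ m p := by
    intro p y
    have hLne : ((L:ℝ)) ≠ 0 := by positivity
    rw [hφp]
    simp only [norm_div, Complex.norm_natCast]
    rw [div_mul_cancel₀ _ hLne]
    exact hφnorm p y
  -- hypothesis restated
  have H1 : δ * N₁ * N₂ ≤ ∑ y ∈ Y, ∑ p ∈ P, (L:ℝ) * ‖φp p y‖ ^ 2 := by
    have hrw : ∀ y : ℤ, ∑ᶠ x : ℤ, ‖condExp (Bpart q L)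
        (fun t => (∑ a ∈ A, f a (t, y)) / (A.card : ℂ)) x‖ ^ 2
        = ∑ p ∈ P, (L:ℝ) * ‖φp p y‖ ^ 2 := by
      intro y
      rw [finsum_condExp_sq hq0 hL0 X _
        (fun x hx => by by_contra hxX; exact hx (hFsupp x y hxX))]
    have := Hyp
    rw [le_div_iff₀ (by positivity : (0:ℝ) < (N₂:ℝ))] at this
    calc δ * N₁ * N₂ ≤ ∑ y ∈ Y, ∑ᶠ x : ℤ, ‖condExp (Bpart q L)
          (fun t => (∑ a ∈ A, f a (t, y)) / (A.card : ℂ)) x‖ ^ 2 := by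
          rw [hY]; linarith [this]
      _ = ∑ y ∈ Y, ∑ p ∈ P, (L:ℝ) * ‖φp p y‖ ^ 2 := Finset.sum_congr rfl (fun y _ => hrw y)
  -- pigeonhole in y
  have hy₀ex : ∃ y₀ ∈ Y, δ * N₁ ≤ ∑ p ∈ P, (L:ℝ) * ‖φp p y₀‖ ^ 2 := by
    by_contra hcon
    push_neg at hcon
    have hlt : ∑ y ∈ Y, ∑ p ∈ P, (L:ℝ) * ‖φp p y‖^2 < ∑ y ∈ Y, δ * N₁ :=
      Finset.sum_lt_sum_of_nonempty hYne (fun y hy => hcon y hy)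
    rw [Finset.sum_const, hYcard, nsmul_eq_mul] at hlt
    nlinarith [H1]
  obtain ⟨y₀, hy₀Y, hy₀⟩ := hy₀ex
  obtain ⟨p₀, hp₀P, hp₀max⟩ := P.exists_max_image (fun p => m p) hPne
  have hsumm : ∑ p ∈ P, (m p : ℝ) = N₁ := by
    have h := sum_card_inter (L := L) hq0 hL0 X
    rw [hXcard] at h
    calc ∑ p ∈ P, (m p : ℝ) = ((∑ p ∈ P, m p : ℕ) : ℝ) := by push_cast; rfl
      _ = N₁ := by rw [h]
  have hmnonneg : ∀ p, (0:ℝ) ≤ (m p : ℝ) := fun p => Nat.cast_nonneg _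
  have hφnn : ∀ p y, (0:ℝ) ≤ ‖φp p y‖ := fun p y => norm_nonneg _
  have hmm0 : δ * L ≤ (m p₀ : ℝ) := by
    have hstep : ∑ p ∈ P, (L:ℝ)*‖φp p y₀‖^2 ≤ ∑ p ∈ P, (m p : ℝ) * (m p₀ : ℝ) / L := by
      refine Finset.sum_le_sum (fun p hp => ?_)
      have h1 := hφm p y₀
      have h2 : (m p : ℝ) ≤ m p₀ := by exact_mod_cast hp₀max p hp
      rw [le_div_iff₀ (by positivity : (0:ℝ) < (L:ℝ))]
      nlinarith [mul_le_mul h1 h1 (by positivity) (hmnonneg p), h2, hmnonneg p,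
        hφnn p y₀, mul_le_mul_of_nonneg_left h2 (hmnonneg p)]
    rw [← Finset.sum_div, ← Finset.sum_mul, hsumm] at hstep
    have : δ * N₁ ≤ (N₁:ℝ) * (m p₀) / L := le_trans hy₀ hstep
    rw [le_div_iff₀ (by positivity : (0:ℝ) < (L:ℝ))] at this
    nlinarith
  have hqmp : ∀ p, (q:ℝ) * (m p : ℝ) ≤ (N₁:ℝ) + q - 1 := by
    intro p
    have := q_mul_card_inter_le (L := L) hq0 p N₁ hN₁
    rw [← hX] at this
    exact_mod_cast this
  have hδL2 : (2:ℝ) ≤ δ * L := by nlinarith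
  have hqN₁ : (q:ℝ) ≤ N₁ := by nlinarith [hqmp p₀]
  have hqδ2 : (q:ℝ) * δ^2 ≤ 2 := by nlinarith [hqmp p₀]
  -- K bound
  set K : ℝ := (P.card : ℝ) with hK
  have hKb : δ^2 * K ≤ 3 := by
    have hM : (0:ℤ) < (q:ℤ) * L := by positivity
    set s₁ : ℤ := ((N₁:ℤ) - 1) / ((q:ℤ) * L) with hs₁
    have hs₁0 : 0 ≤ s₁ := Int.ediv_nonneg
      (Int.sub_nonneg.mpr (by exact_mod_cast hN₁)) hM.le
    have hmul : s₁ * ((q:ℤ) * L) ≤ (N₁:ℤ) - 1 := Int.ediv_mul_le _ hM.ne'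
    have hcard := P_card_le (L := L) hq0 hL0 N₁
    rw [← hX, ← hs₁] at hcard
    have htn : (((s₁ + 1).toNat : ℤ)) = s₁ + 1 := Int.toNat_of_nonneg (by omega)
    set sR : ℝ := (s₁ : ℝ) with hsR
    have hsR0 : (0:ℝ) ≤ sR := by rw [hsR]; exact_mod_cast hs₁0
    have hKle : K ≤ (q:ℝ) * (sR + 1) := by
      rw [hK]
      have : (P.card : ℝ) ≤ (q : ℝ) * (((s₁ + 1).toNat : ℕ) : ℝ) := by
        exact_mod_cast hcard
      calc (P.card : ℝ) ≤ (q : ℝ) * (((s₁ + 1).toNat : ℕ) : ℝ) := this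
        _ = (q:ℝ) * (sR + 1) := by
            congr 1
            rw [hsR]
            exact_mod_cast congrArg (Int.cast : ℤ → ℝ) htn
    have hmulR : sR * ((q:ℝ) * L) ≤ (N₁:ℝ) - 1 := by
      rw [hsR]; exact_mod_cast hmul
    have e1 : δ * ((q:ℝ) * sR) ≤ 1 := by nlinarith
    nlinarith
  -- pigeonhole in p
  have hpst : ∃ ps ∈ P, δ * N₁ * N₂ ≤ K * ∑ y ∈ Y, (L:ℝ) * ‖φp ps y‖ ^ 2 := by
    by_contra hcon
    push_neg at hcon
    have hKpos : (0:ℝ) < K := by linarith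
    have hlt : ∑ p ∈ P, (K * ∑ y ∈ Y, (L:ℝ) * ‖φp p y‖^2) < ∑ p ∈ P, δ * N₁ * N₂ :=
      Finset.sum_lt_sum_of_nonempty hPne (fun p hp => hcon p hp)
    rw [← Finset.mul_sum, Finset.sum_const, nsmul_eq_mul, ← hK] at hlt
    rw [Finset.sum_comm] at H1
    nlinarith [mul_le_mul_of_nonneg_left H1 (by linarith : (0:ℝ) ≤ K)]
  obtain ⟨ps, hpsP, hps⟩ := hpst
  set φ : ℤ → ℂ := φp ps with hφ
  set mst : ℝ := (m ps : ℝ) with hmst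
  set Sg : ℝ := ∑ y ∈ Y, ‖φ y‖^2 with hSg
  set W : ℝ := ∑ y ∈ Y, ‖φ y‖ with hW
  have hSg0 : 0 ≤ Sg := Finset.sum_nonneg (fun y _ => by positivity)
  have hW0 : 0 ≤ W := Finset.sum_nonneg (fun y _ => norm_nonneg _)
  have hSgK : δ * N₁ * N₂ ≤ K * (L * Sg) := by
    rw [hSg, Finset.mul_sum]
    exact hps
  have hSgpos : 0 < Sg := numeric_sgpos hδ0 hN₁R hN₂R hLR hK1R hSgK
  have hmst0 : 0 ≤ mst := Nat.cast_nonneg _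
  have hmst1 : (1:ℝ) ≤ mst := by
    by_contra hc
    push_neg at hc
    have hz : m ps = 0 := by
      by_contra hz
      have : 1 ≤ m ps := Nat.one_le_iff_ne_zero.2 hz
      have : (1:ℝ) ≤ mst := by rw [hmst]; exact_mod_cast this
      linarith
    have hφ0 : ∀ y, ‖φ y‖ = 0 := by
      intro y
      have := hφm ps y
      rw [hz] at this
      simp only [Nat.cast_zero] at this
      nlinarith [hφnn ps y, hLR]
    have : Sg = 0 := by
      rw [hSg]
      refine Finset.sum_eq_zero (fun y _ => by rw [hφ0 y]; norm_num)
    linarith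
  have hWm : Sg * L ≤ mst * W := by
    rw [hSg, hW, Finset.sum_mul, Finset.mul_sum]
    refine Finset.sum_le_sum (fun y _ => ?_)
    have := hφm ps y
    nlinarith [hφnn ps y]
  have hmL : mst ≤ L := by
    rw [hmst]
    exact_mod_cast card_inter_le_L hq0 ps X
  have hqm2 : (q:ℝ) * mst ≤ 2 * N₁ := by
    have := hqmp ps
    nlinarith
  -- phase function
  set ψ : ℤ → ℂ := fun y => if φ y = 0 then 0 else (starRingEnd ℂ) (φ y) / ((‖φ y‖ : ℝ) : ℂ)
    with hψdef
  have hψφ : ∀ y, ψ y * φ y = ((‖φ y‖ : ℝ) : ℂ) := by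
    intro y
    by_cases hzero : φ y = 0
    · simp [hψdef, hzero]
    · have hn : ‖φ y‖ ≠ 0 := norm_ne_zero_iff.2 hzero
      have hnC : ((‖φ y‖ : ℝ) : ℂ) ≠ 0 := by exact_mod_cast hn
      rw [hψdef]
      simp only [hzero, if_false]
      rw [div_mul_eq_mul_div, mul_comm, Complex.mul_conj']
      rw [div_eq_iff hnC]
      push_cast
      ring
  have hψ1 : ∀ y, ‖ψ y‖ ≤ 1 := by
    intro y
    by_cases hzero : φ y = 0
    · simp [hψdef, hzero]
    · have hn : ‖φ y‖ ≠ 0 := norm_ne_zero_iff.2 hzero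
      rw [hψdef]
      simp only [hzero, if_false]
      rw [norm_div, RCLike.norm_conj, Complex.norm_real, Real.norm_eq_abs,
        abs_of_nonneg (norm_nonneg _), div_self hn]
  -- the correlation kernel
  set c : ℤ → ℤ → ℂ := fun y y' => ∑ x ∈ X, ∑ a ∈ A, f a (x,y) * (starRingEnd ℂ) (f a (x,y'))
    with hc
  set G : ℤ → ℂ := fun x => ∑ y ∈ Y, ψ y * F x y with hG
  set SG : ℝ := ∑ x ∈ X, ‖G x‖^2 with hSG
  have hSG0 : 0 ≤ SG := Finset.sum_nonneg fun x _ => by positivity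
  -- positivity identity
  have hiden : ∑ y ∈ Y, ∑ y' ∈ Y, (ψ y * (starRingEnd ℂ) (ψ y')) * c y y'
      = ∑ x ∈ X, ∑ a ∈ A, (∑ y ∈ Y, ψ y * f a (x,y)) *
          (starRingEnd ℂ) (∑ y ∈ Y, ψ y * f a (x,y)) := by
    have step1 : ∑ y ∈ Y, ∑ y' ∈ Y, (ψ y * (starRingEnd ℂ) (ψ y')) * c y y'
        = ∑ y ∈ Y, ∑ y' ∈ Y, ∑ x ∈ X, ∑ a ∈ A,
            (ψ y * f a (x,y)) * ((starRingEnd ℂ) (ψ y') * (starRingEnd ℂ) (f a (x,y'))) := by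
      refine Finset.sum_congr rfl fun y _ => Finset.sum_congr rfl fun y' _ => ?_
      rw [hc, Finset.mul_sum]
      refine Finset.sum_congr rfl fun x _ => ?_
      rw [Finset.mul_sum]
      exact Finset.sum_congr rfl fun a _ => by ring
    rw [step1]
    have step2 : ∑ y ∈ Y, ∑ y' ∈ Y, ∑ x ∈ X, ∑ a ∈ A,
            (ψ y * f a (x,y)) * ((starRingEnd ℂ) (ψ y') * (starRingEnd ℂ) (f a (x,y')))
        = ∑ x ∈ X, ∑ a ∈ A, ∑ y ∈ Y, ∑ y' ∈ Y,
            (ψ y * f a (x,y)) * ((starRingEnd ℂ) (ψ y') * (starRingEnd ℂ) (f a (x,y'))) := by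
      calc ∑ y ∈ Y, ∑ y' ∈ Y, ∑ x ∈ X, ∑ a ∈ A,
            (ψ y * f a (x,y)) * ((starRingEnd ℂ) (ψ y') * (starRingEnd ℂ) (f a (x,y')))
          = ∑ y ∈ Y, ∑ x ∈ X, ∑ y' ∈ Y, ∑ a ∈ A,
            (ψ y * f a (x,y)) * ((starRingEnd ℂ) (ψ y') * (starRingEnd ℂ) (f a (x,y'))) :=
            Finset.sum_congr rfl fun y _ => Finset.sum_comm
        _ = ∑ x ∈ X, ∑ y ∈ Y, ∑ y' ∈ Y, ∑ a ∈ A,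
            (ψ y * f a (x,y)) * ((starRingEnd ℂ) (ψ y') * (starRingEnd ℂ) (f a (x,y'))) :=
            Finset.sum_comm
        _ = ∑ x ∈ X, ∑ y ∈ Y, ∑ a ∈ A, ∑ y' ∈ Y,
            (ψ y * f a (x,y)) * ((starRingEnd ℂ) (ψ y') * (starRingEnd ℂ) (f a (x,y'))) :=
            Finset.sum_congr rfl fun x _ => Finset.sum_congr rfl fun y _ => Finset.sum_comm
        _ = ∑ x ∈ X, ∑ a ∈ A, ∑ y ∈ Y, ∑ y' ∈ Y,
            (ψ y * f a (x,y)) * ((starRingEnd ℂ) (ψ y') * (starRingEnd ℂ) (f a (x,y'))) :=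
            Finset.sum_congr rfl fun x _ => Finset.sum_comm
    rw [step2]
    refine Finset.sum_congr rfl fun x _ => Finset.sum_congr rfl fun a _ => ?_
    rw [map_sum, Finset.sum_mul_sum]
    exact Finset.sum_congr rfl fun y _ => Finset.sum_congr rfl fun y' _ => by rw [map_mul]
  -- real part identity
  have hTre : (∑ y ∈ Y, ∑ y' ∈ Y, (ψ y * (starRingEnd ℂ) (ψ y')) * c y y').re
      = ∑ x ∈ X, ∑ a ∈ A, ‖∑ y ∈ Y, ψ y * f a (x,y)‖^2 := by
    rw [hiden]
    have : ∑ x ∈ X, ∑ a ∈ A, (∑ y ∈ Y, ψ y * f a (x,y)) *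
          (starRingEnd ℂ) (∑ y ∈ Y, ψ y * f a (x,y))
        = (((∑ x ∈ X, ∑ a ∈ A, ‖∑ y ∈ Y, ψ y * f a (x,y)‖^2 : ℝ)) : ℂ) := by
      push_cast
      exact Finset.sum_congr rfl fun x _ => Finset.sum_congr rfl fun a _ => Complex.mul_conj' _
    rw [this, Complex.ofReal_re]
  -- triangle inequality bound
  have hTbound : (∑ y ∈ Y, ∑ y' ∈ Y, (ψ y * (starRingEnd ℂ) (ψ y')) * c y y').re
      ≤ ∑ y ∈ Y, ∑ y' ∈ Y, ‖c y y'‖ := by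
    refine le_trans (Complex.re_le_norm _) ?_
    refine le_trans (norm_sum_le _ _) (Finset.sum_le_sum fun y _ => ?_)
    refine le_trans (norm_sum_le _ _) (Finset.sum_le_sum fun y' _ => ?_)
    rw [norm_mul, norm_mul, RCLike.norm_conj]
    calc ‖ψ y‖ * ‖ψ y'‖ * ‖c y y'‖ ≤ 1 * 1 * ‖c y y'‖ := by
          refine mul_le_mul (mul_le_mul (hψ1 y) (hψ1 y') (norm_nonneg _) zero_le_one)
            le_rfl (norm_nonneg _) (by norm_num)
      _ = ‖c y y'‖ := by ring
  -- Cauchy-Schwarz in a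
  have hAne : ((A.card : ℕ) : ℂ) ≠ 0 := by
    exact_mod_cast (by positivity : (0:ℝ) < (A.card:ℝ)).ne'
  have hCS : ∀ x, (A.card : ℝ) * ‖G x‖^2 ≤ ∑ a ∈ A, ‖∑ y ∈ Y, ψ y * f a (x,y)‖^2 := by
    intro x
    have hsum_a : ∑ a ∈ A, (∑ y ∈ Y, ψ y * f a (x,y)) = (A.card : ℂ) * G x := by
      rw [Finset.sum_comm, hG]
      simp only
      rw [Finset.mul_sum]
      refine Finset.sum_congr rfl fun y _ => ?_
      rw [← Finset.mul_sum, hF]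
      simp only
      field_simp
    have t1 : ‖∑ a ∈ A, (∑ y ∈ Y, ψ y * f a (x,y))‖ ≤ ∑ a ∈ A, ‖∑ y ∈ Y, ψ y * f a (x,y)‖ :=
      norm_sum_le _ _
    have t2 : (∑ a ∈ A, ‖∑ y ∈ Y, ψ y * f a (x,y)‖)^2
        ≤ (A.card : ℝ) * ∑ a ∈ A, ‖∑ y ∈ Y, ψ y * f a (x,y)‖^2 := by
      have := Finset.sum_mul_sq_le_sq_mul_sq A (fun _ => (1:ℝ))
        (fun a => ‖∑ y ∈ Y, ψ y * f a (x,y)‖)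
      simpa using this
    have t3 : ‖∑ a ∈ A, (∑ y ∈ Y, ψ y * f a (x,y))‖ = (A.card : ℝ) * ‖G x‖ := by
      rw [hsum_a, norm_mul, Complex.norm_natCast]
    have t4 : ((A.card:ℝ) * ‖G x‖)^2 ≤ (A.card : ℝ) * ∑ a ∈ A, ‖∑ y ∈ Y, ψ y * f a (x,y)‖^2 := by
      rw [← t3]
      exact le_trans (pow_le_pow_left₀ (norm_nonneg _) t1 2) t2
    exact numeric_cs hAcard t4
  have hTgeq : (A.card : ℝ) * SG ≤ ∑ x ∈ X, ∑ a ∈ A, ‖∑ y ∈ Y, ψ y * f a (x,y)‖^2 := by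
    rw [hSG, Finset.mul_sum]
    exact Finset.sum_le_sum fun x _ => hCS x
  -- atom sum of G
  have hLneC : ((L:ℕ) : ℂ) ≠ 0 := by
    exact_mod_cast (by positivity : (0:ℝ) < (L:ℝ)).ne'
  have hatom_sum : ∀ y, ∑ t ∈ AtomF q L ps, F t y = (L:ℂ) * φ y := by
    intro y
    rw [hφ, hφp]
    simp only
    field_simp
  have hGatom : ∑ t ∈ AtomF q L ps, G t = (L:ℂ) * ((W : ℝ) : ℂ) := by
    calc ∑ t ∈ AtomF q L ps, G t = ∑ t ∈ AtomF q L ps, ∑ y ∈ Y, ψ y * F t y := rfl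
      _ = ∑ y ∈ Y, ∑ t ∈ AtomF q L ps, ψ y * F t y := Finset.sum_comm
      _ = ∑ y ∈ Y, ψ y * ((L:ℂ) * φ y) := by
          refine Finset.sum_congr rfl fun y _ => ?_
          rw [← Finset.mul_sum, hatom_sum y]
      _ = (L:ℂ) * ∑ y ∈ Y, ψ y * φ y := by
          rw [Finset.mul_sum]
          exact Finset.sum_congr rfl fun y _ => by ring
      _ = (L:ℂ) * ((W : ℝ) : ℂ) := by
          rw [Finset.sum_congr rfl (fun y _ => hψφ y), hW]
          push_cast
          rfl
  have hGzero : ∀ t, t ∉ X → G t = 0 := by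
    intro t ht
    rw [hG]
    simp only
    refine Finset.sum_eq_zero fun y _ => ?_
    rw [hFsupp t y ht, mul_zero]
  have hGsum_eq : ∑ t ∈ AtomF q L ps ∩ X, G t = ∑ t ∈ AtomF q L ps, G t := by
    refine Finset.sum_subset Finset.inter_subset_left fun t ht htn => ?_
    exact hGzero t fun hX' => htn (Finset.mem_inter.2 ⟨ht, hX'⟩)
  have hnormLW : (L:ℝ) * W = ‖∑ t ∈ AtomF q L ps ∩ X, G t‖ := by
    rw [hGsum_eq, hGatom, norm_mul, Complex.norm_natCast, Complex.norm_real,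
      Real.norm_eq_abs, abs_of_nonneg hW0]
  have hLW2 : ((L:ℝ) * W)^2 ≤ mst * SG := by
    have u1 : ‖∑ t ∈ AtomF q L ps ∩ X, G t‖ ≤ ∑ t ∈ AtomF q L ps ∩ X, ‖G t‖ :=
      norm_sum_le _ _
    have u2 : (∑ t ∈ AtomF q L ps ∩ X, ‖G t‖)^2
        ≤ mst * ∑ t ∈ AtomF q L ps ∩ X, ‖G t‖^2 := by
      have := Finset.sum_mul_sq_le_sq_mul_sq (AtomF q L ps ∩ X) (fun _ => (1:ℝ))
        (fun t => ‖G t‖)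
      simpa [hmst, hm] using this
    have u3 : ∑ t ∈ AtomF q L ps ∩ X, ‖G t‖^2 ≤ SG := by
      rw [hSG]
      exact Finset.sum_le_sum_of_subset_of_nonneg Finset.inter_subset_right
        (fun t _ _ => sq_nonneg _)
    have u4 : mst * ∑ t ∈ AtomF q L ps ∩ X, ‖G t‖^2 ≤ mst * SG :=
      mul_le_mul_of_nonneg_left u3 hmst0
    rw [hnormLW]
    exact le_trans (pow_le_pow_left₀ (norm_nonneg _) u1 2) (le_trans u2 u4)
  have hWpos : 0 < W := numeric_Wpos hmst0 hSgpos hLR hWm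
  have hSGbound : δ^6*(N₁:ℝ)*(N₂:ℝ)^2 ≤ 18*SG :=
    numeric_core hδ0 hδ10 hLR hN₁R hN₂R hqR hK1R hSg0 hSG0 hWpos.le hmst0 hmst1 hmL hqm2
      hKb hSgK hSgpos hWm hLW2
  -- lower bound for double sum of ‖c‖
  have hSYY : (A.card : ℝ) * SG ≤ ∑ y ∈ Y, ∑ y' ∈ Y, ‖c y y'‖ :=
    le_trans hTgeq (le_trans (le_of_eq hTre.symm) hTbound)
  -- reindexing
  have hrein : ∀ y ∈ Y, ∑ y' ∈ Y, ‖c y y'‖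
      ≤ ∑ h ∈ Finset.Icc (-(N₂:ℤ)) (N₂:ℤ), ‖c y (y + h)‖ := by
    intro y hy
    have himg : ∑ y' ∈ Y, ‖c y y'‖ = ∑ h ∈ Y.image (fun y' => y' - y), ‖c y (y + h)‖ := by
      rw [Finset.sum_image (by intro a _ b _ hab; exact sub_left_injective hab)]
      exact Finset.sum_congr rfl fun y' _ => by rw [show y + (y' - y) = y' by ring]
    rw [himg]
    refine Finset.sum_le_sum_of_subset_of_nonneg ?_ (fun _ _ _ => norm_nonneg _)
    intro h hh
    rcases Finset.mem_image.1 hh with ⟨y', hy', rfl⟩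
    rw [hY] at hy hy'
    have h1 := Finset.mem_Icc.1 hy
    have h2 := Finset.mem_Icc.1 hy'
    exact Finset.mem_Icc.2 (by omega)
  have hbig : (A.card : ℝ) * SG ≤ ∑ y ∈ Y, ∑ h ∈ Finset.Icc (-(N₂:ℤ)) (N₂:ℤ), ‖c y (y + h)‖ :=
    le_trans hSYY (Finset.sum_le_sum hrein)
  -- final assembly
  have h8eq : δ ^ ((8:ℝ)) = δ^(8:ℕ) := by
    rw [show (8:ℝ) = ((8:ℕ):ℝ) by norm_num, Real.rpow_natCast]
  rw [h8eq, le_div_iff₀ (by positivity : (0:ℝ) < (N₂:ℝ) * (2 * (N₂:ℝ) + 1))]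
  have hterm : ∀ y h : ℤ, ‖(∑ x ∈ X, ∑ a ∈ A, f a (x, y) * (starRingEnd ℂ) (f a (x, y + h)))
      / ((N₁ : ℂ) * (A.card : ℂ))‖ = ‖c y (y + h)‖ / ((N₁:ℝ) * A.card) := by
    intro y h
    rw [hc]
    simp only
    rw [norm_div, norm_mul, Complex.norm_natCast, Complex.norm_natCast]
  have hsum_rw : ∑ y ∈ Y, ∑ h ∈ Finset.Icc (-(N₂:ℤ)) (N₂:ℤ),
        ‖(∑ x ∈ X, ∑ a ∈ A, f a (x, y) * (starRingEnd ℂ) (f a (x, y + h)))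
          / ((N₁ : ℂ) * (A.card : ℂ))‖
      = (∑ y ∈ Y, ∑ h ∈ Finset.Icc (-(N₂:ℤ)) (N₂:ℤ), ‖c y (y + h)‖) / ((N₁:ℝ) * A.card) := by
    rw [Finset.sum_div]
    refine Finset.sum_congr rfl fun y _ => ?_
    rw [Finset.sum_div]
    exact Finset.sum_congr rfl fun h _ => hterm y h
  rw [hsum_rw, le_div_iff₀ (mul_pos (by positivity) hAcard : (0:ℝ) < (N₁:ℝ) * A.card)]
  have hbig2 : (A.card:ℝ) * SG ≤ ∑ y ∈ Y, ∑ h ∈ Finset.Icc (-(N₂:ℤ)) (N₂:ℤ), ‖c y (y + h)‖ := hbig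
  linarith [numeric_final hδ0 hδ10 hN₁R hN₂R hAcard hSG0 hSGbound hbig2]
end
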